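/- Let A be a finite alphabet, let p ≥ 2 be an integer, and let Ω, X ⊆ A^ℕ be subshifts. Then there exists a constant C > 0 such that for all n ≥ 0, | log|P(Δ_n, X_Ω^p × X)| − |Δ_n|·h^T(X_Ω^p × X) | ≤ C·B^n, where B = 1/|x0| ≈ 1.80193 and x0 ≈ 0.55496 is the root of smallest absolute value of the polynomial x³ − 2x² − x + 1. -/

import Mathlib

open Filter Real

/-- The set of patterns of `Z` on the finite window `Λ`: restrictions to `Λ`
of configurations in `Z`, counted by `Nat.card`. -/
noncomputable def pattCount {G A : Type*} (Λ : Set G) (Z : Set (G → A)) : ℕ :=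
  Nat.card (Λ.restrict '' Z)

/-- A subshift of `A^ℕ`: nonempty, closed, shift-invariant. -/
def IsSubshift {A : Type*} [TopologicalSpace A] (Ω : Set (ℕ → A)) : Prop :=
  Ω.Nonempty ∧ IsClosed Ω ∧ ∀ x ∈ Ω, (fun n => x (n + 1)) ∈ Ω

/-- Multiplicative subshift `X_Ω^p`.  Coordinates are 0-indexed: the Lean index
`n` represents the paper coordinate `n + 1`, so the paper ray `(x_{i·p^l})_{l≥0}`
(for `i ≥ 1`, `p ∤ i`) is `fun l => x (i * p ^ l - 1)`. -/
def mulSubshift {A : Type*} (p : ℕ) (Ω : Set (ℕ → A)) : Set (ℕ → A) :=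
  {x | ∀ i : ℕ, 1 ≤ i → ¬ p ∣ i → (fun l => x (i * p ^ l - 1)) ∈ Ω}

/-- Run-length encoding of a word: the list of (letter, length) of its maximal blocks. -/
def runs {α : Type*} [DecidableEq α] : List α → List (α × ℕ)
  | [] => []
  | a :: l =>
    match runs l with
    | [] => [(a, 1)]
    | (b, k) :: r => if a = b then (b, k + 1) :: r else (a, 1) :: (b, k) :: r

/-- Vertices of the 2-tree are words over `{f1, f2}`, encoded as `List (Fin 2)`
(the letter `0` is `f1`, the letter `1` is `f2`); appending letters corresponds to
right multiplication.  `treeBall n = Δ_n` is the ball of radius `n`. -/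
def treeBall2 (n : ℕ) : Set (List (Fin 2)) := {g | g.length ≤ n}

/-- Tree axial product of two subshifts: along every `f1`-ray the labels lie in `X1`,
along every `f2`-ray they lie in `X2`. -/
def treeAxialSub2 {A : Type*} (X1 X2 : Set (ℕ → A)) : Set (List (Fin 2) → A) :=
  {x | ∀ g : List (Fin 2),
    (fun j => x (g ++ List.replicate j (0 : Fin 2))) ∈ X1 ∧
    (fun j => x (g ++ List.replicate j (1 : Fin 2))) ∈ X2}

/-- Tree axial product of two multiplicative subshifts: along every maximal
`f_i`-directed ray (starting at `ε` or at a vertex not ending in `f_i`) the labels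
form an element of `X_{Ωi}^{p_i}`. -/
def treeAxialMulMul2 {A : Type*} (p1 p2 : ℕ) (Ω1 Ω2 : Set (ℕ → A)) :
    Set (List (Fin 2) → A) :=
  {x | ∀ g : List (Fin 2),
    (g.getLast? ≠ some (0 : Fin 2) →
      (fun j => x (g ++ List.replicate j (0 : Fin 2))) ∈ mulSubshift p1 Ω1) ∧
    (g.getLast? ≠ some (1 : Fin 2) →
      (fun j => x (g ++ List.replicate j (1 : Fin 2))) ∈ mulSubshift p2 Ω2)}

/-- Mixed tree axial product: along every maximal `f1`-directed ray the labels form an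
element of `X_Ω^p`, and along every `f2`-ray they form an element of `X`. -/
def treeAxialMulSub2 {A : Type*} (p : ℕ) (Ω X : Set (ℕ → A)) :
    Set (List (Fin 2) → A) :=
  {x | ∀ g : List (Fin 2),
    (g.getLast? ≠ some (0 : Fin 2) →
      (fun j => x (g ++ List.replicate j (0 : Fin 2))) ∈ mulSubshift p Ω) ∧
    (fun j => x (g ++ List.replicate j (1 : Fin 2))) ∈ X}

/-- The length, before reshaping, of the dependency word represented by the reshaped
word `w` in `Δ_k^{(i,1)}` (when `sp = 0`) or `Δ_k^{(1,i)}` (when `sp = 1`): the initial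
block in the special direction `sp` of reshaped length `a` stands for a block of length
`i·p^a − i`, and every other block of reshaped length `a` in direction `f1` (resp. `f2`)
stands for a block of length `p1^a − 1` (resp. `p2^a − 1`). -/
def origLen2 (p1 p2 : ℕ) (sp : Fin 2) (i : ℕ) (w : List (Fin 2)) : ℕ :=
  match runs w with
  | [] => 0
  | (m, a) :: rest =>
      (if m = sp then i * (if m = (0 : Fin 2) then p1 else p2) ^ a - i
       else (if m = (0 : Fin 2) then p1 else p2) ^ a - 1) +
      (rest.map (fun r => (if r.1 = (0 : Fin 2) then p1 else p2) ^ r.2 - 1)).sum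

/-- The reshaped dependency set `Δ_k^{(i,1)}` (for `sp = 0`) or `Δ_k^{(1,i)}` (for
`sp = 1`) of the 2-tree with multiplicative constraints `p1, p2`. -/
def delta2 (p1 p2 : ℕ) (sp : Fin 2) (i k : ℕ) : Set (List (Fin 2)) :=
  {w | origLen2 p1 p2 sp i w ≤ k}

/-- Unreshaped length for the mixed case `X_Ω^p × X`: only `f1`-blocks are reshaped
(the initial one standing for length `i·p^a − i`, later ones for `p^a − 1`), while
`f2`-blocks keep their length. -/
def origLen2m (p i : ℕ) (w : List (Fin 2)) : ℕ :=
  match runs w with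
  | [] => 0
  | (m, a) :: rest =>
      (if m = (0 : Fin 2) then i * p ^ a - i else a) +
      (rest.map (fun r => if r.1 = (0 : Fin 2) then p ^ r.2 - 1 else r.2)).sum

/-- The reshaped dependency set `Δ_k^{(i,1)}` for the mixed case `X_Ω^p × X`. -/
def delta2m (p i k : ℕ) : Set (List (Fin 2)) :=
  {w | origLen2m p i w ≤ k}


namespace SEP

abbrev V := List (Fin 2)

def rep (m : ℕ) : V := List.replicate m (0 : Fin 2)

/-- State after reading reshaped address `β` starting from ray-root prefix `u`
at ray position `P ≥ 1`: returns (ray-root prefix, ray position). -/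
def stt (p : ℕ) : V → ℕ → V → V × ℕ
  | u, P, [] => (u, P)
  | u, P, b :: β => if b = 0 then stt p u (P * p) β
      else stt p (u ++ rep (P - 1) ++ [1]) 1 β

/-- Original vertex corresponding to reshaped address `β` from root `(u,P)`. -/
def iota (p : ℕ) (u : V) (P : ℕ) (β : V) : V :=
  (stt p u P β).1 ++ rep ((stt p u P β).2 - 1)

/-- Original extra depth of reshaped address `β` read from ray position `P`. -/
def ecost (p : ℕ) : ℕ → V → ℕ
  | _, [] => 0
  | P, b :: β => if b = 0 then (P * p - P) + ecost p (P * p) β else 1 + ecost p 1 β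

def UU (u : V) : Prop := u = [] ∨ u.getLast? = some 1

def validR (p : ℕ) (r : V × ℕ) : Prop :=
  UU r.1 ∧ 1 ≤ r.2 ∧ ¬ p ∣ r.2 ∧ (2 ≤ r.2 ∨ r.1 = [])

def Dset (p P k : ℕ) : Set V := {β | ecost p P β ≤ k}

lemma fin2cases (b : Fin 2) : b = 0 ∨ b = 1 := by fin_cases b <;> simp

@[simp] lemma stt_nil (p : ℕ) (u : V) (P : ℕ) : stt p u P [] = (u, P) := rfl

lemma stt_cons0 (p : ℕ) (u : V) (P : ℕ) (β : V) :
    stt p u P ((0 : Fin 2) :: β) = stt p u (P * p) β := by simp [stt]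

lemma stt_cons1 (p : ℕ) (u : V) (P : ℕ) (β : V) :
    stt p u P ((1 : Fin 2) :: β) = stt p (u ++ rep (P - 1) ++ [1]) 1 β := by
  simp [stt]

lemma ecost_cons0 (p P : ℕ) (β : V) :
    ecost p P ((0 : Fin 2) :: β) = (P * p - P) + ecost p (P * p) β := by simp [ecost]

lemma ecost_cons1 (p P : ℕ) (β : V) :
    ecost p P ((1 : Fin 2) :: β) = 1 + ecost p 1 β := by simp [ecost]

lemma stt_snd_pos (p : ℕ) (hp : 1 ≤ p) : ∀ (β u : V) (P : ℕ), 1 ≤ P → 1 ≤ (stt p u P β).2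
  | [], u, P, hP => hP
  | b :: β, u, P, hP => by
    rcases fin2cases b with rfl | rfl
    · rw [stt_cons0]; exact stt_snd_pos p hp β u (P * p) (Nat.one_le_iff_ne_zero.2 (by positivity))
    · rw [stt_cons1]; exact stt_snd_pos p hp β _ 1 le_rfl

lemma UU_append1 (u : V) : UU (u ++ [1]) := Or.inr (by simp)

lemma stt_fst_U (p : ℕ) : ∀ (β u : V) (P : ℕ), UU u → UU (stt p u P β).1
  | [], u, P, hu => hu
  | b :: β, u, P, hu => by
    rcases fin2cases b with rfl | rfl
    · rw [stt_cons0]; exact stt_fst_U p β u (P * p) hu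
    · rw [stt_cons1]; exact stt_fst_U p β _ 1 (UU_append1 _)

lemma stt_snoc0 (p : ℕ) : ∀ (β u : V) (P : ℕ),
    stt p u P (β ++ [(0 : Fin 2)]) = ((stt p u P β).1, (stt p u P β).2 * p)
  | [], u, P => by simp [stt_cons0]
  | b :: β, u, P => by
    rcases fin2cases b with rfl | rfl
    · rw [List.cons_append, stt_cons0, stt_cons0, stt_snoc0 p β]
    · rw [List.cons_append, stt_cons1, stt_cons1, stt_snoc0 p β]

lemma stt_snoc1 (p : ℕ) : ∀ (β u : V) (P : ℕ),
    stt p u P (β ++ [(1 : Fin 2)]) = (iota p u P β ++ [1], 1)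
  | [], u, P => by simp [stt_cons1, iota, rep]
  | b :: β, u, P => by
    rcases fin2cases b with rfl | rfl
    · rw [List.cons_append, stt_cons0, stt_snoc1 p β]
      simp [iota, stt_cons0]
    · rw [List.cons_append, stt_cons1, stt_snoc1 p β]
      simp [iota, stt_cons1]

lemma iota_nil (p : ℕ) (u : V) (P : ℕ) : iota p u P [] = u ++ rep (P - 1) := rfl

lemma iota_snoc1 (p : ℕ) (β u : V) (P : ℕ) :
    iota p u P (β ++ [(1 : Fin 2)]) = iota p u P β ++ [1] := by
  rw [iota, stt_snoc1]; simp [rep]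

lemma iota_snoc0 (p : ℕ) (β u : V) (P : ℕ) :
    iota p u P (β ++ [(0 : Fin 2)]) = (stt p u P β).1 ++ rep ((stt p u P β).2 * p - 1) := by
  rw [iota, stt_snoc0]

lemma stt_rep0 (p : ℕ) : ∀ (j : ℕ) (β u : V) (P : ℕ),
    stt p u P (β ++ List.replicate j (0 : Fin 2)) = ((stt p u P β).1, (stt p u P β).2 * p ^ j)
  | 0, β, u, P => by simp
  | j + 1, β, u, P => by
    have : List.replicate (j + 1) (0 : Fin 2) = List.replicate j (0 : Fin 2) ++ [0] := by
      rw [← List.replicate_succ' ]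
    rw [this, ← List.append_assoc, stt_snoc0, stt_rep0 p j]
    simp [pow_succ, mul_assoc]

lemma iota_rep1 (p : ℕ) : ∀ (j : ℕ) (β u : V) (P : ℕ),
    iota p u P (β ++ List.replicate j (1 : Fin 2)) = iota p u P β ++ List.replicate j (1 : Fin 2)
  | 0, β, u, P => by simp
  | j + 1, β, u, P => by
    have : List.replicate (j + 1) (1 : Fin 2) = List.replicate j (1 : Fin 2) ++ [1] := by
      rw [← List.replicate_succ']
    rw [this, ← List.append_assoc, iota_snoc1, iota_rep1 p j, List.append_assoc, ← this]

lemma length_iota (p : ℕ) (hp : 1 ≤ p) : ∀ (β u : V) (P : ℕ), 1 ≤ P →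
    (iota p u P β).length = u.length + (P - 1) + ecost p P β
  | [], u, P, hP => by simp [iota, rep, ecost]
  | b :: β, u, P, hP => by
    rcases fin2cases b with rfl | rfl
    · rw [iota, stt_cons0, ecost_cons0, ← iota]
      have h1 : 1 ≤ P * p := Nat.one_le_iff_ne_zero.2 (by positivity)
      rw [length_iota p hp β u (P * p) h1]
      have : P ≤ P * p := Nat.le_mul_of_pos_right P (by omega)
      omega
    · rw [iota, stt_cons1, ecost_cons1, ← iota]
      rw [length_iota p hp β _ 1 le_rfl]
      simp [rep]
      omega

/-! ### Unique decomposition of vertices -/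

lemma rep_succ' (m : ℕ) : rep (m + 1) = rep m ++ [(0 : Fin 2)] := by
  simp [rep, ← List.replicate_succ']

lemma UU.not_last0 {u : V} (hu : UU u) : u.getLast? ≠ some (0 : Fin 2) := by
  rcases hu with rfl | h
  · simp
  · simp [h]

lemma UU_of_not_last0 {u : V} (hu : u.getLast? ≠ some (0 : Fin 2)) : UU u := by
  rcases u.eq_nil_or_concat with rfl | ⟨w, b, rfl⟩
  · exact Or.inl rfl
  · right
    rcases fin2cases b with rfl | rfl
    · simp at hu
    · simp

lemma U_decomp_unique : ∀ (m : ℕ) {c c' : V} (m' : ℕ), UU c → UU c' →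
    c ++ rep m = c' ++ rep m' → c = c' ∧ m = m'
  | 0, c, c', 0, hc, hc', h => by simpa [rep] using h
  | 0, c, c', m' + 1, hc, hc', h => by
    exfalso
    apply hc.not_last0
    have h0 : rep 0 = [] := rfl
    rw [h0, List.append_nil] at h
    rw [h, rep_succ', ← List.append_assoc]
    simp
  | m + 1, c, c', 0, hc, hc', h => by
    exfalso
    apply hc'.not_last0
    have h0 : rep 0 = [] := rfl
    rw [h0, List.append_nil] at h
    rw [← h, rep_succ', ← List.append_assoc]
    simp
  | m + 1, c, c', m' + 1, hc, hc', h => by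
    rw [rep_succ', rep_succ', ← List.append_assoc, ← List.append_assoc] at h
    have h2 := List.append_cancel_right h
    obtain ⟨h3, h4⟩ := U_decomp_unique m m' hc hc' h2
    exact ⟨h3, by omega⟩

lemma exists_U_decomp (v : V) : ∃ c m, UU c ∧ v = c ++ rep m := by
  induction v using List.reverseRecOn with
  | nil => exact ⟨[], 0, Or.inl rfl, rfl⟩
  | append_singleton w b ih =>
    rcases fin2cases b with rfl | rfl
    · obtain ⟨c, m, hc, rfl⟩ := ih
      exact ⟨c, m + 1, hc, by rw [rep_succ', List.append_assoc]⟩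
    · exact ⟨w ++ [1], 0, UU_append1 w, by simp [rep]⟩

/-- Existence: every vertex comes from a valid root and an address. -/
lemma iota_surj (p : ℕ) (hp : 2 ≤ p) : ∀ (n : ℕ) (v : V), v.length < n →
    ∃ u P β, validR p (u, P) ∧ iota p u P β = v
  | 0, v, h => absurd h (by omega)
  | n + 1, v, hv => by
    obtain ⟨c, m, hc, rfl⟩ := exists_U_decomp v
    by_cases hdvd : p ∣ (m + 1)
    · obtain ⟨t, ht⟩ := hdvd
      have ht1 : 1 ≤ t := by
        rcases Nat.eq_zero_or_pos t with rfl | h; · omega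
        exact h
      have hle2 : 2 * t ≤ m + 1 := by
        calc 2 * t ≤ p * t := Nat.mul_le_mul_right t hp
        _ = m + 1 := ht.symm
      have hlt : t - 1 < m := by omega
      have hlen : (c ++ rep (t - 1)).length < n := by
        have h1 : (c ++ rep m).length < n + 1 := hv
        simp only [List.length_append, rep, List.length_replicate] at h1 ⊢
        omega
      obtain ⟨u, P, β, hval, hio⟩ := iota_surj p hp n (c ++ rep (t - 1)) hlen
      refine ⟨u, P, β ++ [0], hval, ?_⟩
      rw [iota_snoc0]
      have hU2 : UU (stt p u P β).1 := stt_fst_U p β u P hval.1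
      have hP2 : 1 ≤ (stt p u P β).2 := stt_snd_pos p (by omega) β u P hval.2.1
      have hio' : (stt p u P β).1 ++ rep ((stt p u P β).2 - 1) = c ++ rep (t - 1) := hio
      obtain ⟨he1, he2⟩ := U_decomp_unique _ _ hU2 hc hio'
      have hst : (stt p u P β).2 = t := by omega
      have hm1 : t * p = m + 1 := by rw [Nat.mul_comm, ← ht]
      rw [he1, hst]
      congr 2
      omega
    · by_cases h2 : 2 ≤ m + 1 ∨ c = []
      · exact ⟨c, m + 1, [], ⟨hc, by omega, hdvd, h2⟩, by simp [iota_nil]⟩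
      · push_neg at h2
        obtain ⟨hm, hcne⟩ := h2
        have hm0 : m = 0 := by omega
        subst hm0
        have hlast : c.getLast? = some 1 := hc.resolve_left hcne
        obtain ⟨w, rfl⟩ : ∃ w, c = w ++ [(1 : Fin 2)] := by
          rcases c.eq_nil_or_concat with rfl | ⟨w, b, rfl⟩
          · exact absurd rfl hcne
          · rw [List.concat_eq_append] at hlast ⊢
            simp at hlast
            exact ⟨w, by rw [hlast]⟩
        have hlen : w.length < n := by
          have := hv
          simp [rep] at this ⊢
          omega
        obtain ⟨u, P, β, hval, hio⟩ := iota_surj p hp n w hlen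
        refine ⟨u, P, β ++ [1], hval, ?_⟩
        rw [iota_snoc1, hio]
        simp [rep]

/-! ### Injectivity -/

lemma state_eq_of_iota_eq (p : ℕ) (hp : 1 ≤ p) {u P β u' P' β'} (hU : UU u) (hU' : UU u')
    (hP : 1 ≤ P) (hP' : 1 ≤ P') (h : iota p u P β = iota p u' P' β') :
    (stt p u P β).1 = (stt p u' P' β').1 ∧ (stt p u P β).2 = (stt p u' P' β').2 := by
  have hU2 := stt_fst_U p β u P hU
  have hU2' := stt_fst_U p β' u' P' hU'
  have hP2 := stt_snd_pos p hp β u P hP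
  have hP2' := stt_snd_pos p hp β' u' P' hP'
  obtain ⟨h1, h2⟩ := U_decomp_unique _ _ hU2 hU2' h
  exact ⟨h1, by omega⟩

lemma not_nil_snoc0 (p : ℕ) (hp : 2 ≤ p) {u P u' P' γ'} (hval : validR p (u, P))
    (hU' : UU u') (hP' : 1 ≤ P') :
    iota p u P [] ≠ iota p u' P' (γ' ++ [(0 : Fin 2)]) := by
  intro h
  obtain ⟨-, h2⟩ := state_eq_of_iota_eq p (by omega) hval.1 hU' hval.2.1 hP' h
  rw [stt_nil, stt_snoc0] at h2
  exact hval.2.2.1 ⟨(stt p u' P' γ').2, by rw [h2, Nat.mul_comm]⟩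

lemma not_nil_snoc1 (p : ℕ) (hp : 2 ≤ p) {u P u' P' γ'} (hval : validR p (u, P))
    (hU' : UU u') (hP' : 1 ≤ P') :
    iota p u P [] ≠ iota p u' P' (γ' ++ [(1 : Fin 2)]) := by
  intro h
  obtain ⟨h1, h2⟩ := state_eq_of_iota_eq p (by omega) hval.1 hU' hval.2.1 hP' h
  rw [stt_nil, stt_snoc1] at h1 h2
  simp at h1 h2
  subst h2
  rcases hval.2.2.2 with h | rfl
  · omega
  · simp at h1

lemma not_snoc0_snoc1 (p : ℕ) (hp : 2 ≤ p) {u P γ u' P' γ'}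
    (hU : UU u) (hP : 1 ≤ P) (hU' : UU u') (hP' : 1 ≤ P') :
    iota p u P (γ ++ [(0 : Fin 2)]) ≠ iota p u' P' (γ' ++ [(1 : Fin 2)]) := by
  intro h
  obtain ⟨-, h2⟩ := state_eq_of_iota_eq p (by omega) hU hU' hP hP' h
  rw [stt_snoc0, stt_snoc1] at h2
  have := stt_snd_pos p (by omega) γ u P hP
  simp at h2
  nlinarith

lemma iota_inj' (p : ℕ) (hp : 2 ≤ p) : ∀ (n : ℕ) (u : V) (P : ℕ) (β : V) (u' : V) (P' : ℕ) (β' : V),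
    validR p (u, P) → validR p (u', P') → iota p u P β = iota p u' P' β' →
    (iota p u P β).length < n → u = u' ∧ P = P' ∧ β = β'
  | 0, u, P, β, u', P', β', hv, hv', h, hn => absurd hn (by omega)
  | n + 1, u, P, β, u', P', β', hv, hv', h, hn => by
    have hp1 : (1 : ℕ) ≤ p := by omega
    rcases β.eq_nil_or_concat with rfl | ⟨γ, b, rfl⟩ <;>
      rcases β'.eq_nil_or_concat with rfl | ⟨γ', b', rfl⟩
    · obtain ⟨h1, h2⟩ := state_eq_of_iota_eq p hp1 hv.1 hv'.1 hv.2.1 hv'.2.1 h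
      simp at h1 h2
      exact ⟨h1, h2, rfl⟩
    · simp only [List.concat_eq_append] at h hn ⊢
      rcases fin2cases b' with rfl | rfl
      · exact absurd h (not_nil_snoc0 p hp hv hv'.1 hv'.2.1)
      · exact absurd h (not_nil_snoc1 p hp hv hv'.1 hv'.2.1)
    · simp only [List.concat_eq_append] at h hn ⊢
      rcases fin2cases b with rfl | rfl
      · exact absurd h.symm (not_nil_snoc0 p hp hv' hv.1 hv.2.1)
      · exact absurd h.symm (not_nil_snoc1 p hp hv' hv.1 hv.2.1)
    · simp only [List.concat_eq_append] at h hn ⊢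
      rcases fin2cases b with rfl | rfl <;> rcases fin2cases b' with rfl | rfl
      · -- both snoc0
        obtain ⟨h1, h2⟩ := state_eq_of_iota_eq p hp1 hv.1 hv'.1 hv.2.1 hv'.2.1 h
        rw [stt_snoc0, stt_snoc0] at h1 h2
        simp at h1 h2
        have hm : (stt p u P γ).2 = (stt p u' P' γ').2 := by
          rcases h2 with h2 | h2
          · exact h2
          · omega
        have hio : iota p u P γ = iota p u' P' γ' := by
          rw [iota, iota, h1, hm]
        have hm1 : 1 ≤ (stt p u P γ).2 := stt_snd_pos p hp1 γ u P hv.2.1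
        have hlen : (iota p u P γ).length < n := by
          have e1 := congrArg List.length (iota_snoc0 p γ u P)
          simp [iota, rep] at e1 hn ⊢
          have : (stt p u P γ).2 < (stt p u P γ).2 * p := by
            have h9 : 1 < p := by omega
            calc (stt p u P γ).2 = (stt p u P γ).2 * 1 := by omega
            _ < (stt p u P γ).2 * p := Nat.mul_lt_mul_of_le_of_lt (le_refl _) h9 (by omega)
          omega
        obtain ⟨e1, e2, e3⟩ := iota_inj' p hp n u P γ u' P' γ' hv hv' hio hlen
        exact ⟨e1, e2, by rw [e3]⟩
      · exact absurd h (not_snoc0_snoc1 p hp hv.1 hv.2.1 hv'.1 hv'.2.1)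
      · exact absurd h.symm (not_snoc0_snoc1 p hp hv'.1 hv'.2.1 hv.1 hv.2.1)
      · -- both snoc1
        rw [iota_snoc1, iota_snoc1] at h
        have hio : iota p u P γ = iota p u' P' γ' := List.append_cancel_right h
        have hlen : (iota p u P γ).length < n := by
          have e := congrArg List.length (iota_snoc1 p γ u P)
          simp at e hn
          omega
        obtain ⟨e1, e2, e3⟩ := iota_inj' p hp n u P γ u' P' γ' hv hv' hio hlen
        exact ⟨e1, e2, by rw [e3]⟩

lemma exists_unique_triple (p : ℕ) (hp : 2 ≤ p) (v : V) :
    ∃! t : (V × ℕ) × V, validR p t.1 ∧ iota p t.1.1 t.1.2 t.2 = v := by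
  obtain ⟨u, P, β, hval, hio⟩ := iota_surj p hp (v.length + 1) v (by omega)
  refine ⟨((u, P), β), ⟨hval, hio⟩, ?_⟩
  rintro ⟨⟨u', P'⟩, β'⟩ ⟨hval', hio'⟩
  obtain ⟨h1, h2, h3⟩ := iota_inj' p hp (v.length + 1) u' P' β' u P β hval' hval
    (by rw [hio', hio]) (by rw [hio']; omega)
  simp [h1, h2, h3]

/-- The canonical (root, address) of a vertex. -/
noncomputable def tri (p : ℕ) (hp : 2 ≤ p) (v : V) : (V × ℕ) × V :=
  ((exists_unique_triple p hp v).exists).choose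

lemma tri_valid (p : ℕ) (hp : 2 ≤ p) (v : V) : validR p (tri p hp v).1 :=
  ((exists_unique_triple p hp v).exists).choose_spec.1

lemma tri_iota (p : ℕ) (hp : 2 ≤ p) (v : V) :
    iota p (tri p hp v).1.1 (tri p hp v).1.2 (tri p hp v).2 = v :=
  ((exists_unique_triple p hp v).exists).choose_spec.2

lemma tri_eq (p : ℕ) (hp : 2 ≤ p) {u : V} {P : ℕ} {β v : V}
    (hval : validR p (u, P)) (h : iota p u P β = v) : tri p hp v = ((u, P), β) := by
  have h1 := (exists_unique_triple p hp v).unique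
    ⟨tri_valid p hp v, tri_iota p hp v⟩ (⟨hval, h⟩ : validR p ((((u,P),β) : (V × ℕ) × V)).1 ∧ _)
  exact h1

/-! ### Membership criterion -/

lemma UU.exists_snoc1 {g : V} (hU : UU g) (hne : g ≠ []) : ∃ w, g = w ++ [(1 : Fin 2)] := by
  have hlast : g.getLast? = some 1 := hU.resolve_left hne
  rcases g.eq_nil_or_concat with rfl | ⟨w, b, rfl⟩
  · exact absurd rfl hne
  · rw [List.concat_eq_append] at hlast ⊢
    simp at hlast
    exact ⟨w, by rw [hlast]⟩

lemma shift_mem {A : Type*} {Ω : Set (ℕ → A)} (hΩ : ∀ x ∈ Ω, (fun n => x (n + 1)) ∈ Ω) :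
    ∀ (k : ℕ) (y : ℕ → A), y ∈ Ω → (fun t => y (t + k)) ∈ Ω
  | 0, y, hy => by simpa using hy
  | k + 1, y, hy => by
    have h2 := shift_mem hΩ k _ (hΩ y hy)
    have he : (fun t => y (t + (k + 1))) = fun t => (fun n => y (n + 1)) (t + k) := by
      funext t
      simp [Nat.add_assoc]
    rw [he]
    exact h2

lemma exists_padic (p : ℕ) (hp : 2 ≤ p) (M : ℕ) :
    1 ≤ M → ∃ i l, 1 ≤ i ∧ ¬ p ∣ i ∧ M = i * p ^ l := by
  induction M using Nat.strong_induction_on with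
  | _ M ih =>
    intro hM
    by_cases hd : p ∣ M
    · obtain ⟨t, rfl⟩ := hd
      have ht : 1 ≤ t := by
        rcases Nat.eq_zero_or_pos t with rfl | h
        · omega
        · exact h
      have hlt : t < p * t := by
        calc t = 1 * t := (one_mul t).symm
        _ < p * t := Nat.mul_lt_mul_of_lt_of_le (by omega) (le_refl t) ht
      obtain ⟨i, l, h1, h2, h3⟩ := ih t hlt ht
      exact ⟨i, l + 1, h1, h2, by rw [h3]; ring⟩
    · exact ⟨M, 0, hM, hd, by simp⟩

theorem mem_Z_iff {A : Type*} (p : ℕ) (hp : 2 ≤ p) {Ω X : Set (ℕ → A)}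
    (hΩshift : ∀ x ∈ Ω, (fun n => x (n + 1)) ∈ Ω) (x : V → A) :
    x ∈ treeAxialMulSub2 p Ω X ↔
      ∀ u P, validR p (u, P) → (fun β => x (iota p u P β)) ∈ treeAxialSub2 Ω X := by
  simp only [treeAxialMulSub2, treeAxialSub2, mulSubshift, Set.mem_setOf_eq]
  constructor
  · intro hx u P hval β
    constructor
    · -- f1-ray at address β lies in Ω
      have hUc : UU (stt p u P β).1 := stt_fst_U p β u P hval.1
      have hm1 : 1 ≤ (stt p u P β).2 := stt_snd_pos p (by omega) β u P hval.2.1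
      obtain ⟨i, l, hi1, hip, hil⟩ := exists_padic p hp _ hm1
      have hΩ1 : (fun t => x ((stt p u P β).1 ++ List.replicate (i * p ^ t - 1) (0 : Fin 2))) ∈ Ω :=
        (hx (stt p u P β).1).1 hUc.not_last0 i hi1 hip
      have hsh := shift_mem hΩshift l _ hΩ1
      convert hsh using 1
      funext j
      show x (iota p u P (β ++ List.replicate j (0 : Fin 2))) = _
      rw [iota, stt_rep0]
      have he : (stt p u P β).2 * p ^ j = i * p ^ (j + l) := by
        rw [hil, mul_assoc, ← pow_add, Nat.add_comm l j]
      rw [he]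
      rfl
    · -- f2-ray at address β lies in X
      have h2 := (hx (iota p u P β)).2
      convert h2 using 1
      funext j
      show x (iota p u P (β ++ List.replicate j (1 : Fin 2))) = _
      rw [iota_rep1]
  · intro hY g
    constructor
    · intro hg i hi1 hip
      have hUg : UU g := UU_of_not_last0 hg
      by_cases hcase : 2 ≤ i ∨ g = []
      · have hval : validR p (g, i) := ⟨hUg, hi1, hip, hcase⟩
        have hY1 := (hY g i hval []).1
        convert hY1 using 1
        funext l
        show x (g ++ List.replicate (i * p ^ l - 1) (0 : Fin 2)) = _
        rw [iota, stt_rep0]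
        rfl
      · push_neg at hcase
        obtain ⟨hi2, hgne⟩ := hcase
        have hi : i = 1 := by omega
        subst hi
        obtain ⟨w, rfl⟩ := hUg.exists_snoc1 hgne
        obtain ⟨u, P, β, hval, hio⟩ := iota_surj p hp (w.length + 1) w (by omega)
        have hY1 := (hY u P hval (β ++ [1])).1
        convert hY1 using 1
        funext l
        show x ((w ++ [1]) ++ List.replicate (1 * p ^ l - 1) (0 : Fin 2)) = _
        rw [iota, stt_rep0, stt_snoc1, hio]
        rfl
    · obtain ⟨u, P, β, hval, hio⟩ := iota_surj p hp (g.length + 1) g (by omega)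
      have hY2 := (hY u P hval β).2
      convert hY2 using 1
      funext j
      show x (g ++ List.replicate j (1 : Fin 2)) = x (iota p u P (β ++ List.replicate j 1))
      rw [iota_rep1, hio]

/-! ### Finset infrastructure -/

lemma ecost_ge_length (p : ℕ) (hp : 2 ≤ p) : ∀ (β : V) (P : ℕ), 1 ≤ P → β.length ≤ ecost p P β
  | [], P, hP => by simp [ecost]
  | b :: β, P, hP => by
    rcases fin2cases b with rfl | rfl
    · rw [ecost_cons0]
      have h1 : 1 ≤ P * p := Nat.one_le_iff_ne_zero.2 (by positivity)
      have h2 := ecost_ge_length p hp β (P * p) h1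
      have h3 : 2 * P ≤ P * p := by
        calc 2 * P = P * 2 := by ring
        _ ≤ P * p := Nat.mul_le_mul_left P hp
      simp only [List.length_cons]
      omega
    · rw [ecost_cons1]
      have h2 := ecost_ge_length p hp β 1 le_rfl
      simp only [List.length_cons]
      omega

def listBall : ℕ → Finset V
  | 0 => {[]}
  | n + 1 => ({[]} ∪ (listBall n).image (List.cons 0)) ∪ (listBall n).image (List.cons 1)

lemma mem_listBall : ∀ (n : ℕ) (v : V), v ∈ listBall n ↔ v.length ≤ n
  | 0, v => by
    rw [listBall]
    simp only [Finset.mem_singleton]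
    constructor
    · rintro rfl; simp
    · intro h
      exact List.eq_nil_of_length_eq_zero (by omega)
  | n + 1, v => by
    rcases v with _ | ⟨b, β⟩
    · simp [listBall]
    · rw [listBall]
      simp only [Finset.mem_union, Finset.mem_image, Finset.mem_singleton]
      constructor
      · rintro ((h | ⟨w, hw, he⟩) | ⟨w, hw, he⟩)
        · exact absurd h (by simp)
        · injection he with hb hβ
          subst hb; subst hβ
          have := (mem_listBall n w).1 hw
          simp only [List.length_cons]
          omega
        · injection he with hb hβ
          subst hb; subst hβ
          have := (mem_listBall n w).1 hw
          simp only [List.length_cons]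
          omega
      · intro h
        have hβ : β.length ≤ n := by
          simp only [List.length_cons] at h
          omega
        rcases fin2cases b with rfl | rfl
        · exact Or.inl (Or.inr ⟨β, (mem_listBall n β).2 hβ, rfl⟩)
        · exact Or.inr ⟨β, (mem_listBall n β).2 hβ, rfl⟩

lemma treeBall2_coe (n : ℕ) : treeBall2 n = ↑(listBall n) := by
  ext v
  simp [treeBall2, mem_listBall]

lemma treeBall2_finite (n : ℕ) : (treeBall2 n).Finite := by
  rw [treeBall2_coe]
  exact (listBall n).finite_toSet

lemma Dset_finite (p : ℕ) (hp : 2 ≤ p) (P k : ℕ) (hP : 1 ≤ P) : (Dset p P k).Finite := by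
  apply (treeBall2_finite k).subset
  intro β hβ
  have := ecost_ge_length p hp β P hP
  exact le_trans this hβ

open scoped Classical in
noncomputable def rootSet (p n : ℕ) : Finset (V × ℕ) :=
  ((listBall n) ×ˢ (Finset.range (n + 2))).filter
    (fun r => validR p r ∧ r.1.length + r.2 ≤ n + 1)

lemma mem_rootSet {p n : ℕ} {r : V × ℕ} :
    r ∈ rootSet p n ↔ validR p r ∧ r.1.length + r.2 ≤ n + 1 := by
  classical
  rw [rootSet]
  simp only [Finset.mem_filter, Finset.mem_product, Finset.mem_range, mem_listBall]
  constructor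
  · tauto
  · intro h
    have h1 : 1 ≤ r.2 := h.1.2.1
    exact ⟨⟨by omega, by omega⟩, h⟩

/-! ### The master factorization -/

lemma tri_cover (p : ℕ) (hp : 2 ≤ p) (n : ℕ) (v : V) (hv : v.length ≤ n) :
    (tri p hp v).1 ∈ rootSet p n ∧
      ecost p (tri p hp v).1.2 (tri p hp v).2
        ≤ n + 1 - ((tri p hp v).1.1.length + (tri p hp v).1.2) := by
  have hval := tri_valid p hp v
  have hio := tri_iota p hp v
  have hlenv := length_iota p (by omega) (tri p hp v).2 (tri p hp v).1.1 (tri p hp v).1.2 hval.2.1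
  rw [hio] at hlenv
  have hP := hval.2.1
  constructor
  · exact mem_rootSet.2 ⟨hval, by omega⟩
  · omega

lemma iota_len_le (p : ℕ) (hp : 2 ≤ p) (n : ℕ) {r : V × ℕ} (hr : r ∈ rootSet p n)
    {β : V} (hβ : β ∈ Dset p r.2 (n + 1 - (r.1.length + r.2))) :
    (iota p r.1 r.2 β).length ≤ n := by
  obtain ⟨hval, hbud⟩ := mem_rootSet.1 hr
  have hlenv := length_iota p (by omega) β r.1 r.2 hval.2.1
  have hβ' : ecost p r.2 β ≤ n + 1 - (r.1.length + r.2) := hβ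
  have h1 : 1 ≤ r.2 := hval.2.1
  omega

theorem master {A : Type*} (p : ℕ) (hp : 2 ≤ p) (Ω X : Set (ℕ → A))
    (hΩshift : ∀ x ∈ Ω, (fun n => x (n + 1)) ∈ Ω)
    (hYne : (treeAxialSub2 Ω X).Nonempty) (n : ℕ) :
    pattCount (treeBall2 n) (treeAxialMulSub2 p Ω X) =
      ∏ r ∈ rootSet p n,
        pattCount (Dset p r.2 (n + 1 - (r.1.length + r.2))) (treeAxialSub2 Ω X) := by
  classical
  obtain ⟨y₀, hy₀⟩ := hYne
  have hmemΛ : ∀ (r : V × ℕ), r ∈ rootSet p n →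
      ∀ (β : {β : V // β ∈ Dset p r.2 (n + 1 - (r.1.length + r.2))}),
      iota p r.1 r.2 β.1 ∈ treeBall2 n := fun r hr β => iota_len_le p hp n hr β.2
  set Y := treeAxialSub2 Ω X with hYdef
  set Zs := treeAxialMulSub2 p Ω X with hZdef
  set F : ((treeBall2 n).restrict '' Zs) →
      (∀ r : (rootSet p n),
        ((Dset p r.1.2 (n + 1 - (r.1.1.length + r.1.2))).restrict '' Y)) :=
    fun φ r => ⟨fun β => φ.1 ⟨iota p r.1.1 r.1.2 β.1, hmemΛ r.1 r.2 β⟩, by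
      obtain ⟨fn, hfn⟩ := φ
      obtain ⟨x, hx, rfl⟩ := hfn
      exact ⟨fun β => x (iota p r.1.1 r.1.2 β),
        (mem_Z_iff p hp hΩshift x).1 hx r.1.1 r.1.2 (mem_rootSet.1 r.2).1, rfl⟩⟩
    with hF
  have hbij : Function.Bijective F := by
    constructor
    · rintro ⟨f1, hf1⟩ ⟨f2, hf2⟩ h
      apply Subtype.ext
      funext v
      have hv : (v : V).length ≤ n := v.2
      obtain ⟨hr, hd⟩ := tri_cover p hp n v.1 hv
      have h1 := congrFun (Subtype.ext_iff.1 (congrFun h ⟨(tri p hp v.1).1, hr⟩))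
        ⟨(tri p hp v.1).2, hd⟩
      have h2 : v = ⟨iota p (tri p hp v.1).1.1 (tri p hp v.1).1.2 (tri p hp v.1).2,
          hmemΛ (tri p hp v.1).1 hr ⟨(tri p hp v.1).2, hd⟩⟩ :=
        Subtype.ext (tri_iota p hp v.1).symm
      rw [h2]
      exact h1
    · intro ψ
      have hrep : ∀ r : (rootSet p n), ∃ y, y ∈ Y ∧
          (Dset p r.1.2 (n + 1 - (r.1.1.length + r.1.2))).restrict y = (ψ r).1 :=
        fun r => (ψ r).2
      choose yy hyyY hyyr using hrep
      set xg : V → A := fun v =>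
        if h : (tri p hp v).1 ∈ rootSet p n then yy ⟨(tri p hp v).1, h⟩ (tri p hp v).2
        else y₀ (tri p hp v).2 with hxg
      have hcomp : ∀ u P, validR p (u, P) → (fun β => xg (iota p u P β)) =
          (if h : (u, P) ∈ rootSet p n then yy ⟨(u, P), h⟩ else y₀) := by
        intro u P hval
        funext β
        have htri := tri_eq p hp hval (rfl : iota p u P β = iota p u P β)
        simp only [hxg, htri]
        split_ifs with h
        · rfl
        · rfl
      have hxgZ : xg ∈ Zs := by
        rw [hZdef, mem_Z_iff p hp hΩshift]
        intro u P hval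
        rw [hcomp u P hval]
        split_ifs with h
        · exact hyyY _
        · exact hy₀
      refine ⟨⟨(treeBall2 n).restrict xg, ⟨xg, hxgZ, rfl⟩⟩, ?_⟩
      funext r
      apply Subtype.ext
      funext β
      show xg (iota p r.1.1 r.1.2 β.1) = (ψ r).1 β
      have h4 := congrFun (hcomp r.1.1 r.1.2 (mem_rootSet.1 r.2).1) β.1
      have h5 : (if h : (r.1.1, r.1.2) ∈ rootSet p n then yy ⟨(r.1.1, r.1.2), h⟩ else y₀)
          = yy r := by
        rw [dif_pos r.2]
      rw [h4, h5]
      exact congrFun (hyyr r) β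
  rw [pattCount, Nat.card_eq_of_bijective F hbij, Nat.card_pi]
  exact Finset.prod_coe_sort (rootSet p n)
    (fun r => pattCount (Dset p r.2 (n + 1 - (r.1.length + r.2))) Y)

/-! ### Splitting the root set -/

lemma UU_iff (u : V) : UU u ↔ u = [] ∨ ∃ w, u = w ++ [(1 : Fin 2)] := by
  constructor
  · intro hU
    rcases eq_or_ne u [] with rfl | hne
    · exact Or.inl rfl
    · exact Or.inr (hU.exists_snoc1 hne)
  · rintro (rfl | ⟨w, rfl⟩)
    · exact Or.inl rfl
    · exact UU_append1 w

lemma UU_cons_iff {b : Fin 2} {u : V} (hu : u ≠ []) : UU (b :: u) ↔ UU u := by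
  rw [UU_iff, UU_iff]
  constructor
  · rintro (h | ⟨w, hw⟩)
    · exact absurd h (by simp)
    · rcases w with _ | ⟨c, w'⟩
      · simp only [List.nil_append] at hw
        injection hw with h1 h2
        exact absurd h2 hu
    
      · rw [List.cons_append] at hw
        injection hw with h1 h2
        exact Or.inr ⟨w', h2⟩
  · rintro (rfl | ⟨w, rfl⟩)
    · exact absurd rfl hu
    · exact Or.inr ⟨b :: w, rfl⟩

lemma UU_single1 : UU [(1 : Fin 2)] := UU_append1 []

lemma not_UU_cons0_nil : ¬ UU [(0 : Fin 2)] := by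
  rintro (h | h) <;> simp at h

/-- The base root `([],1)` is in every root set. -/
lemma base_mem_rootSet (p n : ℕ) (hp : 2 ≤ p) : (([] : V), 1) ∈ rootSet p n := by
  rw [mem_rootSet]
  refine ⟨⟨Or.inl rfl, le_rfl, ?_, Or.inr rfl⟩, by simp⟩
  intro h
  have := Nat.le_of_dvd (by omega) h
  omega

open scoped Classical in
lemma rootSet_succ (p n : ℕ) (hp : 2 ≤ p) :
    rootSet p (n + 1) =
      (((rootSet p n).filter (fun r => 2 ≤ r.2)).image (fun r => ((1 : Fin 2) :: r.1, r.2))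
      ∪ ((rootSet p n).filter (fun r => r.1 ≠ [])).image (fun r => ((0 : Fin 2) :: r.1, r.2)))
      ∪ (rootSet p (n + 1)).filter (fun r => r.1 = []) := by
  ext r
  simp only [Finset.mem_union, Finset.mem_image, Finset.mem_filter, mem_rootSet]
  constructor
  · intro hr
    obtain ⟨⟨hU, hi1, hip, h2i⟩, hbud⟩ := hr
    rcases r with ⟨ru, i⟩
    rcases ru with _ | ⟨b, u⟩
    · exact Or.inr ⟨⟨⟨Or.inl rfl, hi1, hip, Or.inr rfl⟩, by simpa using hbud⟩, rfl⟩
    · have hne : (b :: u : V) ≠ [] := by simp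
      have h2 : 2 ≤ i := by
        rcases h2i with h | h
        · exact h
        · exact absurd h hne
      have hbud' : u.length + i ≤ n + 1 := by
        simp only [List.length_cons] at hbud
        omega
      rcases fin2cases b with rfl | rfl
      · -- b = 0 : u ≠ []
        have hune : u ≠ [] := by
          rintro rfl
          exact not_UU_cons0_nil hU
        have hUu : UU u := (UU_cons_iff hune).1 hU
        exact Or.inl (Or.inr ⟨(u, i), ⟨⟨⟨hUu, hi1, hip, Or.inl h2⟩, hbud'⟩, hune⟩, rfl⟩)
      · -- b = 1
        have hUu : UU u := by
          rcases eq_or_ne u [] with rfl | hune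
          · exact Or.inl rfl
          · exact (UU_cons_iff hune).1 hU
        exact Or.inl (Or.inl ⟨(u, i), ⟨⟨⟨hUu, hi1, hip, Or.inl h2⟩, hbud'⟩, h2⟩, rfl⟩)
  · rintro ((⟨⟨u, i⟩, hmem, rfl⟩ | ⟨⟨u, i⟩, hmem, rfl⟩) | ⟨hr, _⟩)
    · obtain ⟨⟨⟨hUu, hi1, hip, _⟩, hbud⟩, h2⟩ := hmem
      dsimp only at hUu hi1 hip hbud h2 ⊢
      refine ⟨⟨?_, hi1, hip, Or.inl h2⟩, ?_⟩
      · rcases eq_or_ne u [] with rfl | hune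
        · exact UU_single1
        · exact (UU_cons_iff hune).2 hUu
      · simp only [List.length_cons]
        omega
    · obtain ⟨⟨⟨hUu, hi1, hip, hor⟩, hbud⟩, hune⟩ := hmem
      dsimp only at hUu hi1 hip hbud hor hune ⊢
      have h2 : 2 ≤ i := by
        rcases hor with h | h
        · exact h
        · exact absurd h hune
      refine ⟨⟨(UU_cons_iff hune).2 hUu, hi1, hip, Or.inl h2⟩, ?_⟩
      simp only [List.length_cons]
      omega
    · exact hr

/-! ### The product recursion -/

open scoped Classical in
noncomputable def Seps (p m : ℕ) : Finset (V × ℕ) := (rootSet p m).filter (fun r => r.1 = [])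

noncomputable def facN {A : Type*} (Ω X : Set (ℕ → A)) (p i k : ℕ) : ℕ :=
  pattCount (Dset p i k) (treeAxialSub2 Ω X)

noncomputable def fF {A : Type*} (Ω X : Set (ℕ → A)) (p m : ℕ) (r : V × ℕ) : ℕ :=
  facN Ω X p r.2 (m + 1 - (r.1.length + r.2))

lemma master' {A : Type*} (p : ℕ) (hp : 2 ≤ p) (Ω X : Set (ℕ → A))
    (hΩshift : ∀ x ∈ Ω, (fun n => x (n + 1)) ∈ Ω)
    (hYne : (treeAxialSub2 Ω X).Nonempty) (m : ℕ) :
    pattCount (treeBall2 m) (treeAxialMulSub2 p Ω X) = ∏ r ∈ rootSet p m, fF Ω X p m r := by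
  unfold fF facN
  exact master p hp Ω X hΩshift hYne m

theorem prod_rec {A : Type*} (p : ℕ) (hp : 2 ≤ p) (Ω X : Set (ℕ → A))
    (hΩshift : ∀ x ∈ Ω, (fun n => x (n + 1)) ∈ Ω)
    (hYne : (treeAxialSub2 Ω X).Nonempty) (n : ℕ) :
    pattCount (treeBall2 (n + 1)) (treeAxialMulSub2 p Ω X) * facN Ω X p 1 n
        * ∏ r ∈ Seps p n, fF Ω X p n r
      = (∏ r ∈ Seps p (n + 1), fF Ω X p (n + 1) r)
        * pattCount (treeBall2 n) (treeAxialMulSub2 p Ω X)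
        * pattCount (treeBall2 n) (treeAxialMulSub2 p Ω X) := by
  classical
  rw [master' p hp Ω X hΩshift hYne (n + 1), master' p hp Ω X hΩshift hYne n]
  rw [rootSet_succ p n hp]
  have hdisj1 : Disjoint
      (((rootSet p n).filter (fun r => 2 ≤ r.2)).image (fun r => ((1 : Fin 2) :: r.1, r.2)))
      (((rootSet p n).filter (fun r => r.1 ≠ [])).image (fun r => ((0 : Fin 2) :: r.1, r.2))) := by
    rw [Finset.disjoint_left]
    intro a ha hb
    obtain ⟨r, hr, rfl⟩ := Finset.mem_image.1 ha
    obtain ⟨r', hr', he⟩ := Finset.mem_image.1 hb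
    rw [Prod.mk.injEq] at he
    injection he.1 with hh _
    exact absurd hh (by decide)
  have hdisj2 : Disjoint
      ((((rootSet p n).filter (fun r => 2 ≤ r.2)).image (fun r => ((1 : Fin 2) :: r.1, r.2)))
        ∪ (((rootSet p n).filter (fun r => r.1 ≠ [])).image (fun r => ((0 : Fin 2) :: r.1, r.2))))
      ((rootSet p (n + 1)).filter (fun r => r.1 = [])) := by
    rw [Finset.disjoint_left]
    rintro a ha hb
    have hb2 : a.1 = [] := (Finset.mem_filter.1 hb).2
    rcases Finset.mem_union.1 ha with h | h
    · obtain ⟨r, hr, rfl⟩ := Finset.mem_image.1 h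
      simp at hb2
    · obtain ⟨r, hr, rfl⟩ := Finset.mem_image.1 h
      simp at hb2
  rw [Finset.prod_union hdisj2, Finset.prod_union hdisj1]
  rw [Finset.prod_image (by
    rintro r hr r' hr' he
    rw [Prod.mk.injEq] at he
    obtain ⟨h1, h2⟩ := he
    injection h1 with _ h1'
    exact Prod.ext h1' h2)]
  rw [Finset.prod_image (by
    rintro r hr r' hr' he
    rw [Prod.mk.injEq] at he
    obtain ⟨h1, h2⟩ := he
    injection h1 with _ h1'
    exact Prod.ext h1' h2)]
  have he1 : ∀ r ∈ (rootSet p n).filter (fun r => 2 ≤ r.2),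
      fF Ω X p (n + 1) ((1 : Fin 2) :: r.1, r.2) = fF Ω X p n r := by
    intro r hr
    unfold fF
    congr 1
    simp only [List.length_cons]
    omega
  have he0 : ∀ r ∈ (rootSet p n).filter (fun r => r.1 ≠ []),
      fF Ω X p (n + 1) ((0 : Fin 2) :: r.1, r.2) = fF Ω X p n r := by
    intro r hr
    unfold fF
    congr 1
    simp only [List.length_cons]
    omega
  rw [Finset.prod_congr rfl he1, Finset.prod_congr rfl he0]
  -- identify the two complementary products
  have h2 : (∏ r ∈ (rootSet p n).filter (fun r => 2 ≤ r.2), fF Ω X p n r) * facN Ω X p 1 n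
      = ∏ r ∈ rootSet p n, fF Ω X p n r := by
    have hsplit := Finset.prod_filter_mul_prod_filter_not (rootSet p n)
      (fun r => 2 ≤ r.2) (fF Ω X p n)
    have hone : (rootSet p n).filter (fun r => ¬ 2 ≤ r.2) = {(([] : V), 1)} := by
      ext r
      simp only [Finset.mem_filter, Finset.mem_singleton, mem_rootSet]
      constructor
      · rintro ⟨⟨⟨hU, hi1, hip, hor⟩, hbud⟩, hlt⟩
        have : r.2 = 1 := by omega
        rcases hor with h | h
        · omega
        · rcases r with ⟨u, i⟩
          simp only at h this
          rw [Prod.mk.injEq]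
          exact ⟨h, this⟩
      · rintro rfl
        exact ⟨mem_rootSet.1 (base_mem_rootSet p n hp), by norm_num⟩
    rw [hone, Finset.prod_singleton] at hsplit
    rw [← hsplit]
    congr 1
  have h3 : (∏ r ∈ (rootSet p n).filter (fun r => r.1 ≠ []), fF Ω X p n r)
      * (∏ r ∈ Seps p n, fF Ω X p n r) = ∏ r ∈ rootSet p n, fF Ω X p n r := by
    have hsplit := Finset.prod_filter_mul_prod_filter_not (rootSet p n)
      (fun r => r.1 ≠ []) (fF Ω X p n)
    have heq : (rootSet p n).filter (fun r => ¬ r.1 ≠ []) = Seps p n := by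
      unfold Seps
      apply Finset.filter_congr
      intro r hr
      simp
    rw [heq] at hsplit
    exact hsplit
  -- assemble
  calc ((∏ r ∈ (rootSet p n).filter (fun r => 2 ≤ r.2), fF Ω X p n r)
        * (∏ r ∈ (rootSet p n).filter (fun r => r.1 ≠ []), fF Ω X p n r)
        * (∏ r ∈ (rootSet p (n+1)).filter (fun r => r.1 = []), fF Ω X p (n+1) r))
        * facN Ω X p 1 n * ∏ r ∈ Seps p n, fF Ω X p n r
      = (∏ r ∈ (rootSet p (n+1)).filter (fun r => r.1 = []), fF Ω X p (n+1) r)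
        * ((∏ r ∈ (rootSet p n).filter (fun r => 2 ≤ r.2), fF Ω X p n r) * facN Ω X p 1 n)
        * ((∏ r ∈ (rootSet p n).filter (fun r => r.1 ≠ []), fF Ω X p n r)
            * (∏ r ∈ Seps p n, fF Ω X p n r)) := by ring
    _ = _ := by
        rw [h2, h3]
        unfold Seps
        ring

/-! ### Counting bounds -/

lemma pattCount_pos {A : Type*} [Finite A] {D : Set V} (hD : D.Finite) {Y : Set (V → A)}
    (hY : Y.Nonempty) : 0 < pattCount D Y := by
  haveI := hD.to_subtype
  rw [pattCount]
  haveI : Nonempty (D.restrict '' Y) := by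
    obtain ⟨y, hy⟩ := hY
    exact ⟨⟨D.restrict y, ⟨y, hy, rfl⟩⟩⟩
  exact Nat.card_pos

lemma pattCount_le {A : Type*} [Fintype A] {D : Set V} (hD : D.Finite) (Y : Set (V → A)) :
    pattCount D Y ≤ Fintype.card A ^ D.ncard := by
  haveI := hD.to_subtype
  rw [pattCount]
  calc Nat.card (D.restrict '' Y) ≤ Nat.card (↥D → A) :=
      Nat.card_le_card_of_injective Subtype.val Subtype.val_injective
  _ = Fintype.card A ^ D.ncard := by
      rw [Nat.card_fun, Nat.card_eq_fintype_card, Nat.card_coe_set_eq]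

lemma ecost_mono (p : ℕ) (hp : 2 ≤ p) : ∀ (β : V) (Q P : ℕ), Q ≤ P →
    ecost p Q β ≤ ecost p P β
  | [], _, _, _ => le_rfl
  | b :: β, Q, P, h => by
    rcases fin2cases b with rfl | rfl
    · rw [ecost_cons0, ecost_cons0]
      have h1 : Q * p ≤ P * p := Nat.mul_le_mul_right p h
      have hrec := ecost_mono p hp β (Q * p) (P * p) h1
      have hQ : Q ≤ Q * p := Nat.le_mul_of_pos_right Q (by omega)
      have hPm : P ≤ P * p := Nat.le_mul_of_pos_right P (by omega)
      have h2 : Q * p - Q ≤ P * p - P := by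
        zify [hQ, hPm]
        have hc : (Q : ℤ) * (p - 1) ≤ (P : ℤ) * (p - 1) := by
          apply mul_le_mul_of_nonneg_right
          · exact_mod_cast h
          · have : (2 : ℤ) ≤ p := by exact_mod_cast hp
            linarith
        push_cast at hc ⊢
        nlinarith
      omega
    · rw [ecost_cons1, ecost_cons1]

lemma Dset_mono_P (p : ℕ) (hp : 2 ≤ p) (P k : ℕ) (hP : 1 ≤ P) :
    Dset p P k ⊆ Dset p 1 k := by
  intro β hβ
  have h1 : ecost p 1 β ≤ ecost p P β := ecost_mono p hp β 1 P hP
  exact le_trans h1 hβ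

lemma Dset_zero (p : ℕ) (hp : 2 ≤ p) (P : ℕ) (hP : 1 ≤ P) : Dset p P 0 = {([] : V)} := by
  ext β
  simp only [Dset, Set.mem_setOf_eq, Set.mem_singleton_iff]
  constructor
  · intro h
    rcases β with _ | ⟨b, γ⟩
    · rfl
    · exfalso
      rcases fin2cases b with rfl | rfl
      · rw [ecost_cons0] at h
        have hPm : 2 * P ≤ P * p := by
          calc 2 * P = P * 2 := by ring
          _ ≤ P * p := Nat.mul_le_mul_left P hp
        omega
      · rw [ecost_cons1] at h
        omega
  · rintro rfl
    simp [ecost]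

lemma ncard_Dset_succ (p : ℕ) (hp : 2 ≤ p) (P k : ℕ) (hP : 1 ≤ P) :
    (Dset p P k).ncard ≤ 1 +
      (if P * p - P ≤ k then (Dset p (P * p) (k - (P * p - P))).ncard else 0)
      + (Dset p 1 (k - 1)).ncard := by
  have hPp : 1 ≤ P * p := Nat.one_le_iff_ne_zero.2 (by positivity)
  have hfinm : (Dset p (P * p) (k - (P * p - P))).Finite := Dset_finite p hp _ _ hPp
  have hfin1 : (Dset p 1 (k - 1)).Finite := Dset_finite p hp _ _ le_rfl
  set M : Set V := (if P * p - P ≤ k then (List.cons 0 '' Dset p (P * p) (k - (P * p - P)))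
      else ∅) with hM
  have hMfin : M.Finite := by
    rw [hM]
    split_ifs
    · exact hfinm.image _
    · exact Set.finite_empty
  have hsub : Dset p P k ⊆ ({([] : V)} : Set V) ∪ (M ∪ (List.cons 1 '' Dset p 1 (k - 1))) := by
    intro β hβ
    have hβ' : ecost p P β ≤ k := hβ
    rcases β with _ | ⟨b, γ⟩
    · exact Or.inl rfl
    · right
      rcases fin2cases b with rfl | rfl
      · rw [ecost_cons0] at hβ'
        have hcle : P * p - P ≤ k := by omega
        left
        rw [hM, if_pos hcle]
        exact ⟨γ, by show ecost p (P * p) γ ≤ k - (P * p - P); omega, rfl⟩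
      · rw [ecost_cons1] at hβ'
        right
        exact ⟨γ, by show ecost p 1 γ ≤ k - 1; omega, rfl⟩
  calc (Dset p P k).ncard
      ≤ (({([] : V)} : Set V) ∪ (M ∪ (List.cons 1 '' Dset p 1 (k - 1)))).ncard :=
        Set.ncard_le_ncard hsub (((Set.finite_singleton _).union
          (hMfin.union (hfin1.image _))))
    _ ≤ ({([] : V)} : Set V).ncard + (M ∪ (List.cons 1 '' Dset p 1 (k - 1))).ncard :=
        Set.ncard_union_le _ _
    _ ≤ 1 + (M.ncard + (List.cons 1 '' Dset p 1 (k - 1)).ncard) := by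
        rw [Set.ncard_singleton]
        exact Nat.add_le_add_left (Set.ncard_union_le _ _) 1
    _ ≤ 1 + (if P * p - P ≤ k then (Dset p (P * p) (k - (P * p - P))).ncard else 0)
        + (Dset p 1 (k - 1)).ncard := by
        have hMcard : M.ncard ≤
            (if P * p - P ≤ k then (Dset p (P * p) (k - (P * p - P))).ncard else 0) := by
          rw [hM]
          split_ifs
          · rw [Set.ncard_image_of_injective _ (fun x y h => by injection h)]
          · simp
        have himg : (List.cons (1 : Fin 2) '' Dset p 1 (k - 1)).ncard
            = (Dset p 1 (k - 1)).ncard :=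
          Set.ncard_image_of_injective _ (fun x y h => by injection h)
        omega

/-! ### The exponential bound on reshaped balls -/

noncomputable def hw (P : ℕ) : ℝ := if P = 1 then 1 else if P = 2 then 0.78 else 0.68

lemma hw_ge (P : ℕ) : 0.68 ≤ hw P := by
  rw [hw]; split_ifs <;> norm_num

lemma hw_le_one (P : ℕ) : hw P ≤ 1 := by
  rw [hw]; split_ifs <;> norm_num

lemma hw_le_078 {P : ℕ} (h : 2 ≤ P) : hw P ≤ 0.78 := by
  rw [hw]
  split_ifs with h1 h2
  · omega
  · norm_num
  · norm_num

lemma hw_eq_068 {P : ℕ} (h : 3 ≤ P) : hw P = 0.68 := by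
  rw [hw]
  split_ifs with h1 h2
  · omega
  · omega
  · rfl

lemma ncard_Dset_bound (p : ℕ) (hp : 2 ≤ p) {x0 : ℝ} (hx1 : 0.5549 ≤ x0) (hx2 : x0 ≤ 0.555) :
    ∀ k P, 1 ≤ P → ((Dset p P k).ncard : ℝ) * x0 ^ k ≤ 130 * hw P := by
  have hx0 : (0 : ℝ) < x0 := by norm_num at hx1 ⊢; linarith
  have hx01 : x0 ≤ 1 := by linarith
  intro k
  induction k using Nat.strong_induction_on with
  | _ k ih =>
    intro P hP
    rcases Nat.eq_zero_or_pos k with rfl | hk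
    · rw [Dset_zero p hp P hP, Set.ncard_singleton]
      have := hw_ge P
      norm_num
      linarith
    · -- recursion
      have hrec := ncard_Dset_succ p hp P k hP
      have hxk : (0:ℝ) ≤ x0 ^ k := le_of_lt (pow_pos hx0 k)
      have hxk1 : x0 ^ k ≤ 1 := pow_le_one₀ (le_of_lt hx0) hx01
      have hcast : ((Dset p P k).ncard : ℝ) * x0 ^ k ≤
          (1 + (if P * p - P ≤ k then ((Dset p (P * p) (k - (P * p - P))).ncard : ℝ) else 0)
            + ((Dset p 1 (k - 1)).ncard : ℝ)) * x0 ^ k := by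
        apply mul_le_mul_of_nonneg_right _ hxk
        have := hrec
        split_ifs with hc
        · rw [if_pos hc] at this
          exact_mod_cast this
        · rw [if_neg hc] at this
          exact_mod_cast this
      -- bound the pieces
      have hPp : 1 ≤ P * p := Nat.one_le_iff_ne_zero.2 (by positivity)
      have hQP : 2 * P ≤ P * p := by
        calc 2 * P = P * 2 := by ring
        _ ≤ P * p := Nat.mul_le_mul_left P hp
      have hcP : P ≤ P * p - P := by omega
      -- tail term
      have htail : ((Dset p 1 (k - 1)).ncard : ℝ) * x0 ^ k ≤ 130 * x0 := by
        have h1 := ih (k - 1) (by omega) 1 le_rfl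
        rw [hw] at h1
        simp only [if_pos rfl] at h1
        have he : x0 ^ k = x0 ^ (k - 1) * x0 := by
          rw [← pow_succ]
          congr 1
          omega
        rw [he, ← mul_assoc]
        calc ((Dset p 1 (k - 1)).ncard : ℝ) * x0 ^ (k - 1) * x0 ≤ (130 * 1) * x0 := by
              apply mul_le_mul_of_nonneg_right h1 (le_of_lt hx0)
        _ = 130 * x0 := by ring
      -- middle term
      have hmid : (if P * p - P ≤ k then ((Dset p (P * p) (k - (P * p - P))).ncard : ℝ) else 0)
          * x0 ^ k ≤ 130 * hw (P * p) * x0 ^ (P * p - P) := by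
        split_ifs with hc
        · have h1 := ih (k - (P * p - P)) (by omega) (P * p) hPp
          have he : x0 ^ k = x0 ^ (k - (P * p - P)) * x0 ^ (P * p - P) := by
            rw [← pow_add]
            congr 1
            omega
          rw [he, ← mul_assoc]
          apply mul_le_mul_of_nonneg_right h1 (le_of_lt (pow_pos hx0 _))
        · rw [zero_mul]
          have h68 := hw_ge (P * p)
          have hxm := pow_pos hx0 (P * p - P)
          nlinarith
      have hfinal : ((Dset p P k).ncard : ℝ) * x0 ^ k
          ≤ 1 + 130 * hw (P * p) * x0 ^ (P * p - P) + 130 * x0 := by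
        calc ((Dset p P k).ncard : ℝ) * x0 ^ k
            ≤ (1 + (if P * p - P ≤ k then ((Dset p (P * p) (k - (P * p - P))).ncard : ℝ) else 0)
              + ((Dset p 1 (k - 1)).ncard : ℝ)) * x0 ^ k := hcast
          _ = x0 ^ k
              + (if P * p - P ≤ k then ((Dset p (P * p) (k - (P * p - P))).ncard : ℝ) else 0)
                * x0 ^ k
              + ((Dset p 1 (k - 1)).ncard : ℝ) * x0 ^ k := by ring
          _ ≤ 1 + 130 * hw (P * p) * x0 ^ (P * p - P) + 130 * x0 := by
              linarith [hmid, htail, hxk1]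
      have h68 := hw_ge (P * p)
      rcases eq_or_ne P 1 with rfl | hP1
      · have hpow : x0 ^ (1 * p - 1) ≤ x0 := by
          have h1 : 1 ≤ 1 * p - 1 := by omega
          calc x0 ^ (1 * p - 1) ≤ x0 ^ 1 := pow_le_pow_of_le_one (le_of_lt hx0) hx01 h1
          _ = x0 := pow_one x0
        have h078 : hw (1 * p) ≤ 0.78 := hw_le_078 (by omega)
        have hprod : hw (1 * p) * x0 ^ (1 * p - 1) ≤ 0.78 * x0 :=
          mul_le_mul h078 hpow (le_of_lt (pow_pos hx0 _)) (by norm_num)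
        have hhw : hw 1 = 1 := by norm_num [hw]
        rw [hhw]
        linarith
      rcases eq_or_ne P 2 with rfl | hP2
      · have hpow : x0 ^ (2 * p - 2) ≤ x0 ^ 2 := by
          have h1 : 2 ≤ 2 * p - 2 := by omega
          exact pow_le_pow_of_le_one (le_of_lt hx0) hx01 h1
        have hsq : x0 ^ 2 ≤ 0.308025 := by nlinarith
        have h068 : hw (2 * p) = 0.68 := hw_eq_068 (by omega)
        have hprod : hw (2 * p) * x0 ^ (2 * p - 2) ≤ 0.68 * 0.308025 := by
          rw [h068]
          have hp2 := pow_pos hx0 (2 * p - 2)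
          nlinarith
        have hhw : hw 2 = 0.78 := by norm_num [hw]
        rw [hhw]
        linarith
      · have hP3 : 3 ≤ P := by omega
        have hpow : x0 ^ (P * p - P) ≤ x0 ^ 3 := by
          have h1 : 3 ≤ P * p - P := by omega
          exact pow_le_pow_of_le_one (le_of_lt hx0) hx01 h1
        have hsq : x0 ^ 2 ≤ 0.308025 := by nlinarith
        have hcub : x0 ^ 3 ≤ 0.170953875 := by
          have he : x0 ^ 3 = x0 ^ 2 * x0 := by ring
          rw [he]
          calc x0 ^ 2 * x0 ≤ 0.308025 * 0.555 :=
              mul_le_mul hsq hx2 (le_of_lt hx0) (by norm_num)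
          _ = 0.170953875 := by norm_num
        have h068 : hw (P * p) = 0.68 := hw_eq_068 (by omega)
        have hprod : hw (P * p) * x0 ^ (P * p - P) ≤ 0.68 * 0.170953875 := by
          rw [h068]
          have hp3 := pow_pos hx0 (P * p - P)
          nlinarith
        rw [hw_eq_068 hP3]
        linarith

/-! ### Numeric facts about the root x0 -/

lemma x0_bounds {x0 : ℝ} (hroot : x0 ^ 3 - 2 * x0 ^ 2 - x0 + 1 = 0)
    (hmin : ∀ y : ℝ, y ^ 3 - 2 * y ^ 2 - y + 1 = 0 → |x0| ≤ |y|) :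
    0.5549 ≤ x0 ∧ x0 ≤ 0.555 := by
  -- a root exists in [0.5549, 0.555]
  obtain ⟨y, hy, hyr⟩ : ∃ y ∈ Set.Icc (0.5549 : ℝ) 0.555, y ^ 3 - 2 * y ^ 2 - y + 1 = 0 := by
    have hcont : ContinuousOn (fun y : ℝ => y ^ 3 - 2 * y ^ 2 - y + 1)
        (Set.Icc (0.5549 : ℝ) 0.555) := by fun_prop
    have hsub := intermediate_value_Icc' (by norm_num : (0.5549 : ℝ) ≤ 0.555) hcont
    have h0 : (0 : ℝ) ∈ Set.Icc ((fun y : ℝ => y ^ 3 - 2 * y ^ 2 - y + 1) 0.555)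
        ((fun y : ℝ => y ^ 3 - 2 * y ^ 2 - y + 1) 0.5549) := by
      constructor <;> norm_num
    obtain ⟨y, hy, hy0⟩ := hsub h0
    exact ⟨y, hy, hy0⟩
  have habs : |x0| ≤ 0.555 := by
    have h1 := hmin y hyr
    have h2 : |y| ≤ 0.555 := by
      rw [abs_le]
      constructor
      · linarith [hy.1]
      · exact hy.2
    linarith
  have hx0le : x0 ≤ 0.555 := by
    have := abs_le.1 habs
    exact this.2
  have hx0ge' : -0.555 ≤ x0 := (abs_le.1 habs).1
  refine ⟨?_, hx0le⟩
  by_contra hlt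
  push_neg at hlt
  -- x0 ∈ [-0.555, 0.5549) : the polynomial is positive there
  have hsq : x0 ^ 2 ≤ 0.308025 := by nlinarith
  rcases le_or_gt 0 x0 with hpos | hneg
  · -- 0 ≤ x0 < 0.5549
    have hfac : x0 ^ 3 - 2 * x0 ^ 2 - x0 + 1 =
        ((0.5549 : ℝ) ^ 3 - 2 * 0.5549 ^ 2 - 0.5549 + 1) +
        (x0 - 0.5549) * (x0 ^ 2 + 0.5549 * x0 + 0.5549 ^ 2 - 2 * x0 - 2 * 0.5549 - 1) := by
      ring
    have hsq' : x0 ^ 2 ≤ 0.30791401 := by nlinarith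
    have hneg2 : x0 ^ 2 + 0.5549 * x0 + (0.5549 : ℝ) ^ 2 - 2 * x0 - 2 * 0.5549 - 1 < 0 := by
      nlinarith
    have hge : (x0 - 0.5549) * (x0 ^ 2 + 0.5549 * x0 + (0.5549 : ℝ) ^ 2 - 2 * x0
        - 2 * 0.5549 - 1) > 0 := by
      apply mul_pos_of_neg_of_neg
      · linarith
      · exact hneg2
    rw [hroot] at hfac
    norm_num at hfac
    nlinarith
  · -- -0.555 ≤ x0 < 0
    have hcube : -0.170953875 ≤ x0 ^ 3 := by
      have he : x0 ^ 3 = x0 ^ 2 * x0 := by ring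
      rw [he]
      nlinarith [sq_nonneg x0]
    nlinarith

/-! ### Log estimates -/

section LogEst

variable {A : Type*} [Fintype A]

lemma facN_pos [Finite A] (p : ℕ) (hp : 2 ≤ p) (Ω X : Set (ℕ → A))
    (hYne : (treeAxialSub2 Ω X).Nonempty) (i k : ℕ) (hi : 1 ≤ i) : 0 < facN Ω X p i k :=
  pattCount_pos (Dset_finite p hp i k hi) hYne

lemma log_facN_le (p : ℕ) (hp : 2 ≤ p) (Ω X : Set (ℕ → A))
    (hYne : (treeAxialSub2 Ω X).Nonempty)
    {x0 : ℝ} (hx1 : 0.5549 ≤ x0) (hx2 : x0 ≤ 0.555) (i k : ℕ) (hi : 1 ≤ i) :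
    Real.log (facN Ω X p i k) ≤ 130 * Real.log (Fintype.card A) * (1 / x0) ^ k := by
  have hx0 : (0 : ℝ) < x0 := by norm_num at hx1 ⊢; linarith
  obtain ⟨y₀, hy₀⟩ := id hYne
  haveI : Nonempty A := ⟨y₀ []⟩
  have hA : 1 ≤ Fintype.card A := Fintype.card_pos
  have hlogA : 0 ≤ Real.log (Fintype.card A) := Real.log_nonneg (by exact_mod_cast hA)
  have h1 : facN Ω X p i k ≤ Fintype.card A ^ (Dset p i k).ncard :=
    pattCount_le (Dset_finite p hp i k hi) _
  have h2 : Real.log (facN Ω X p i k) ≤ ((Dset p i k).ncard : ℝ) * Real.log (Fintype.card A) := by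
    calc Real.log (facN Ω X p i k) ≤ Real.log ((Fintype.card A : ℝ) ^ (Dset p i k).ncard) := by
          apply Real.log_le_log
          · exact_mod_cast facN_pos p hp Ω X hYne i k hi
          · exact_mod_cast h1
    _ = ((Dset p i k).ncard : ℝ) * Real.log (Fintype.card A) := by
          rw [Real.log_pow]
  have h3 : ((Dset p i k).ncard : ℝ) ≤ 130 * (1 / x0) ^ k := by
    have hb := ncard_Dset_bound p hp hx1 hx2 k i hi
    have hw1 := hw_le_one i
    have hle : ((Dset p i k).ncard : ℝ) * x0 ^ k ≤ 130 := by nlinarith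
    have hpow : (0 : ℝ) < x0 ^ k := pow_pos hx0 k
    rw [div_pow, one_pow, mul_one_div, le_div_iff₀ hpow]
    exact hle
  calc Real.log (facN Ω X p i k) ≤ ((Dset p i k).ncard : ℝ) * Real.log (Fintype.card A) := h2
  _ ≤ (130 * (1 / x0) ^ k) * Real.log (Fintype.card A) :=
      mul_le_mul_of_nonneg_right h3 hlogA
  _ = 130 * Real.log (Fintype.card A) * (1 / x0) ^ k := by ring

lemma geom_bound {B : ℝ} (hB1 : 1.8018 ≤ B) (hB2 : B ≤ 1.8022) (m : ℕ) :
    (∑ j ∈ Finset.range (m + 2), B ^ j) ≤ 4.06 * B ^ m := by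
  have hBm : (0 : ℝ) < B ^ m := pow_pos (by linarith) m
  have hgeo := geom_sum_mul B (m + 2)
  have hfac : B ^ 2 - 4.06 * B + 4.06 ≤ 0 := by nlinarith
  have hkey : (∑ j ∈ Finset.range (m + 2), B ^ j) * (B - 1) ≤ (4.06 * B ^ m) * (B - 1) := by
    rw [hgeo]
    have he : B ^ (m + 2) = B ^ m * B ^ 2 := by rw [← pow_add]
    have hmn := mul_nonpos_of_nonneg_of_nonpos (le_of_lt hBm) hfac
    nlinarith
  have hB1' : (0 : ℝ) < B - 1 := by linarith
  exact le_of_mul_le_mul_right hkey hB1'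

lemma EE_bound (p : ℕ) (hp : 2 ≤ p) (Ω X : Set (ℕ → A))
    (hYne : (treeAxialSub2 Ω X).Nonempty)
    {x0 : ℝ} (hx1 : 0.5549 ≤ x0) (hx2 : x0 ≤ 0.555) (m : ℕ) :
    Real.log (∏ r ∈ Seps p m, fF Ω X p m r)
      ≤ 528 * Real.log (Fintype.card A) * (1 / x0) ^ m := by
  classical
  have hx0 : (0 : ℝ) < x0 := by norm_num at hx1 ⊢; linarith
  have hB : (1 : ℝ) / x0 ≤ 1.8022 := by
    rw [div_le_iff₀ hx0]
    nlinarith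
  have hB1 : (1.8018 : ℝ) ≤ 1 / x0 := by
    rw [le_div_iff₀ hx0]
    nlinarith
  obtain ⟨y₀, hy₀⟩ := id hYne
  haveI : Nonempty A := ⟨y₀ []⟩
  have hA : 1 ≤ Fintype.card A := Fintype.card_pos
  have hlogA : 0 ≤ Real.log (Fintype.card A) := Real.log_nonneg (by exact_mod_cast hA)
  have hpos : ∀ r ∈ Seps p m, 0 < fF Ω X p m r := by
    intro r hr
    have hr' : r ∈ rootSet p m := Finset.mem_filter.1 hr |>.1
    exact facN_pos p hp Ω X hYne r.2 _ (mem_rootSet.1 hr').1.2.1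
  rw [Real.log_prod (fun r hr => by exact_mod_cast (hpos r hr).ne')]
  have hterm : ∀ r ∈ Seps p m, Real.log (fF Ω X p m r)
      ≤ 130 * Real.log (Fintype.card A) * (1 / x0) ^ (m + 1 - r.2) := by
    intro r hr
    have hr1 : r.1 = [] := (Finset.mem_filter.1 hr).2
    have hr' : r ∈ rootSet p m := Finset.mem_filter.1 hr |>.1
    have hi1 : 1 ≤ r.2 := (mem_rootSet.1 hr').1.2.1
    have he : fF Ω X p m r = facN Ω X p r.2 (m + 1 - r.2) := by
      unfold fF
      rw [hr1]
      norm_num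
    rw [he]
    exact log_facN_le p hp Ω X hYne hx1 hx2 r.2 (m + 1 - r.2) hi1
  calc (∑ r ∈ Seps p m, Real.log (fF Ω X p m r))
      ≤ ∑ r ∈ Seps p m, 130 * Real.log (Fintype.card A) * (1 / x0) ^ (m + 1 - r.2) :=
        Finset.sum_le_sum hterm
    _ ≤ ∑ r ∈ (Finset.range (m + 2)).image (fun i => ((([] : V), i) : V × ℕ)),
          130 * Real.log (Fintype.card A) * (1 / x0) ^ (m + 1 - r.2) := by
        apply Finset.sum_le_sum_of_subset_of_nonneg
        · intro r hr
          have hr1 : r.1 = [] := (Finset.mem_filter.1 hr).2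
          have hr' : r ∈ rootSet p m := Finset.mem_filter.1 hr |>.1
          have hbud := (mem_rootSet.1 hr').2
          apply Finset.mem_image.2
          refine ⟨r.2, Finset.mem_range.2 (by omega), ?_⟩
          rcases r with ⟨u, i⟩
          simp only at hr1 ⊢
          rw [hr1]
        · intro r _ _
          have := pow_pos (by positivity : (0:ℝ) < 1 / x0) (m + 1 - r.2)
          positivity
    _ = ∑ i ∈ Finset.range (m + 2),
          130 * Real.log (Fintype.card A) * (1 / x0) ^ (m + 1 - i) := by
        rw [Finset.sum_image]
        intro a _ b _ he
        rw [Prod.mk.injEq] at he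
        exact he.2
    _ = 130 * Real.log (Fintype.card A) * ∑ i ∈ Finset.range (m + 2), (1 / x0) ^ (m + 1 - i) := by
        rw [Finset.mul_sum]
    _ = 130 * Real.log (Fintype.card A) * ∑ j ∈ Finset.range (m + 2), (1 / x0) ^ j := by
        congr 1
        have := Finset.sum_range_reflect (fun j => (1 / x0) ^ j) (m + 2)
        calc (∑ i ∈ Finset.range (m + 2), (1 / x0) ^ (m + 1 - i))
            = ∑ i ∈ Finset.range (m + 2), (fun j => (1 / x0) ^ j) (m + 2 - 1 - i) := by
              apply Finset.sum_congr rfl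
              intro i hi
              congr 1
        _ = ∑ j ∈ Finset.range (m + 2), (1 / x0) ^ j := this
    _ ≤ 130 * Real.log (Fintype.card A) * (4.06 * (1 / x0) ^ m) := by
        apply mul_le_mul_of_nonneg_left (geom_bound hB1 hB m) (by positivity)
    _ ≤ 528 * Real.log (Fintype.card A) * (1 / x0) ^ m := by
        have := pow_pos (by positivity : (0:ℝ) < 1 / x0) m
        nlinarith

lemma Pn_pos (p : ℕ) (hp : 2 ≤ p) (Ω X : Set (ℕ → A))
    (hΩshift : ∀ x ∈ Ω, (fun n => x (n + 1)) ∈ Ω)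
    (hYne : (treeAxialSub2 Ω X).Nonempty) (n : ℕ) :
    0 < pattCount (treeBall2 n) (treeAxialMulSub2 p Ω X) := by
  rw [master' p hp Ω X hΩshift hYne n]
  apply Finset.prod_pos
  intro r hr
  show 0 < facN Ω X p r.2 _
  exact facN_pos p hp Ω X hYne r.2 _ (mem_rootSet.1 hr).1.2.1

lemma Seps_prod_pos (p : ℕ) (hp : 2 ≤ p) (Ω X : Set (ℕ → A))
    (hYne : (treeAxialSub2 Ω X).Nonempty) (m : ℕ) :
    0 < ∏ r ∈ Seps p m, fF Ω X p m r := by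
  apply Finset.prod_pos
  intro r hr
  have hr' : r ∈ rootSet p m := (Finset.mem_filter.1 hr).1
  show 0 < facN Ω X p r.2 _
  exact facN_pos p hp Ω X hYne r.2 _ (mem_rootSet.1 hr').1.2.1

lemma gamma_bound (p : ℕ) (hp : 2 ≤ p) (Ω X : Set (ℕ → A))
    (hΩshift : ∀ x ∈ Ω, (fun n => x (n + 1)) ∈ Ω)
    (hYne : (treeAxialSub2 Ω X).Nonempty)
    {x0 : ℝ} (hx1 : 0.5549 ≤ x0) (hx2 : x0 ≤ 0.555) (n : ℕ) :
    |Real.log (pattCount (treeBall2 (n + 1)) (treeAxialMulSub2 p Ω X))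
        - 2 * Real.log (pattCount (treeBall2 n) (treeAxialMulSub2 p Ω X))|
      ≤ (1610 * Real.log (Fintype.card A) + 1) * (1 / x0) ^ n := by
  have hx0 : (0 : ℝ) < x0 := by norm_num at hx1 ⊢; linarith
  have hBpos : (0 : ℝ) < 1 / x0 := by positivity
  have hB2 : (1 : ℝ) / x0 ≤ 1.8022 := by
    rw [div_le_iff₀ hx0]
    nlinarith
  obtain ⟨y₀, hy₀⟩ := id hYne
  haveI : Nonempty A := ⟨y₀ []⟩
  have hA : 1 ≤ Fintype.card A := Fintype.card_pos
  have hlogA : 0 ≤ Real.log (Fintype.card A) := Real.log_nonneg (by exact_mod_cast hA)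
  -- positive quantities
  have hP1 := Pn_pos p hp Ω X hΩshift hYne (n + 1)
  have hP0 := Pn_pos p hp Ω X hΩshift hYne n
  have hf := facN_pos p hp Ω X hYne 1 n le_rfl
  have hE0 := Seps_prod_pos p hp Ω X hYne n
  have hE1 := Seps_prod_pos p hp Ω X hYne (n + 1)
  -- the identity
  have hid := prod_rec p hp Ω X hΩshift hYne n
  have hcast : ((pattCount (treeBall2 (n + 1)) (treeAxialMulSub2 p Ω X) : ℝ))
      * (facN Ω X p 1 n : ℝ) * ((∏ r ∈ Seps p n, fF Ω X p n r : ℕ) : ℝ)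
      = ((∏ r ∈ Seps p (n + 1), fF Ω X p (n + 1) r : ℕ) : ℝ)
        * (pattCount (treeBall2 n) (treeAxialMulSub2 p Ω X) : ℝ)
        * (pattCount (treeBall2 n) (treeAxialMulSub2 p Ω X) : ℝ) := by
    exact_mod_cast congrArg (fun t : ℕ => (t : ℝ)) hid
  have hne : ∀ m : ℕ, 0 < m → ((m : ℝ) ≠ 0) := fun m hm => by
    exact_mod_cast Nat.pos_iff_ne_zero.1 hm
  have hlog := congrArg Real.log hcast
  rw [Real.log_mul (mul_ne_zero (hne _ hP1) (hne _ hf)) (hne _ hE0),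
      Real.log_mul (hne _ hP1) (hne _ hf),
      Real.log_mul (mul_ne_zero (hne _ hE1) (hne _ hP0)) (hne _ hP0),
      Real.log_mul (hne _ hE1) (hne _ hP0)] at hlog
  -- log-nonnegativity
  have hlognn : ∀ m : ℕ, 0 < m → 0 ≤ Real.log m := fun m hm =>
    Real.log_nonneg (by exact_mod_cast hm)
  -- bounds
  have hEEn := EE_bound p hp Ω X hYne hx1 hx2 n
  have hEEn1 := EE_bound p hp Ω X hYne hx1 hx2 (n + 1)
  rw [← Nat.cast_prod] at hEEn hEEn1
  have hLL := log_facN_le p hp Ω X hYne hx1 hx2 1 n le_rfl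
  have hBn : (0 : ℝ) < (1 / x0) ^ n := pow_pos hBpos n
  have hpow1 : (1 / x0) ^ (n + 1) = (1 / x0) * (1 / x0) ^ n := by rw [pow_succ]; ring
  have hEEn1' : Real.log ((∏ r ∈ Seps p (n + 1), fF Ω X p (n + 1) r : ℕ) : ℝ)
      ≤ 952 * Real.log (Fintype.card A) * (1 / x0) ^ n := by
    calc Real.log ((∏ r ∈ Seps p (n + 1), fF Ω X p (n + 1) r : ℕ) : ℝ)
        ≤ 528 * Real.log (Fintype.card A) * (1 / x0) ^ (n + 1) := hEEn1
      _ = 528 * Real.log (Fintype.card A) * (1 / x0) * (1 / x0) ^ n := by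
          rw [hpow1]; ring
      _ = (528 * (1 / x0)) * (Real.log (Fintype.card A) * (1 / x0) ^ n) := by ring
      _ ≤ 952 * (Real.log (Fintype.card A) * (1 / x0) ^ n) := by
          apply mul_le_mul_of_nonneg_right _ (mul_nonneg hlogA (le_of_lt hBn))
          nlinarith
      _ = 952 * Real.log (Fintype.card A) * (1 / x0) ^ n := by ring
  rw [abs_le]
  constructor
  · have h1 : 0 ≤ Real.log ((∏ r ∈ Seps p (n + 1), fF Ω X p (n + 1) r : ℕ) : ℝ) :=
      hlognn _ hE1
    have h2 : Real.log ((∏ r ∈ Seps p n, fF Ω X p n r : ℕ) : ℝ)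
        ≤ 528 * Real.log (Fintype.card A) * (1 / x0) ^ n := hEEn
    have h3 : Real.log ((facN Ω X p 1 n : ℕ) : ℝ)
        ≤ 130 * Real.log (Fintype.card A) * (1 / x0) ^ n := hLL
    nlinarith
  · have h1 : 0 ≤ Real.log ((∏ r ∈ Seps p n, fF Ω X p n r : ℕ) : ℝ) := hlognn _ hE0
    have h2 : 0 ≤ Real.log ((facN Ω X p 1 n : ℕ) : ℝ) := hlognn _ hf
    nlinarith

end LogEst

/-! ### Telescoping -/

open Filter in
lemma telescope {a : ℕ → ℝ} {hT B K : ℝ} (hB1 : 1.8018 ≤ B) (hB2 : B ≤ 1.8022) (hK : 0 ≤ K)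
    (hγ : ∀ n, |a (n + 1) - 2 * a n| ≤ K * B ^ n)
    (hlim : Tendsto (fun n : ℕ => a n / ((2 : ℝ) ^ (n + 1) - 1)) atTop (nhds hT)) :
    ∃ C : ℝ, 0 < C ∧ ∀ n, |a n - ((2 : ℝ) ^ (n + 1) - 1) * hT| ≤ C * B ^ n := by
  set d : ℕ → ℝ := fun n => a n - ((2 : ℝ) ^ (n + 1) - 1) * hT with hd
  set e : ℕ → ℝ := fun n => d n / 2 ^ n with he
  set r : ℝ := B / 2 with hr
  have hr0 : (0 : ℝ) < r := by rw [hr]; linarith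
  have hr1 : r ≤ 0.9011 := by rw [hr]; linarith
  set M : ℝ := (K + |hT| + 1) / 2 with hM
  have hM0 : 0 < M := by
    have := abs_nonneg hT
    rw [hM]; linarith
  have hstep : ∀ n, |e (n + 1) - e n| ≤ M * r ^ n := by
    intro n
    have h2n : (0 : ℝ) < 2 ^ n := by positivity
    have heq : e (n + 1) - e n = (a (n + 1) - 2 * a n - hT) / 2 ^ (n + 1) := by
      rw [he, hd]
      simp only
      rw [div_sub_div _ _ (by positivity : ((2:ℝ)^(n+1)) ≠ 0) (by positivity : ((2:ℝ)^n) ≠ 0)]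
      rw [div_eq_div_iff (by positivity) (by positivity)]
      ring
    rw [heq, abs_div]
    have habs2 : |(2 : ℝ) ^ (n + 1)| = 2 ^ (n + 1) := abs_of_pos (by positivity)
    rw [habs2, div_le_iff₀ (by positivity : (0:ℝ) < (2:ℝ) ^ (n + 1))]
    have h1 : |a (n + 1) - 2 * a n - hT| ≤ K * B ^ n + |hT| := by
      calc |a (n + 1) - 2 * a n - hT| ≤ |a (n + 1) - 2 * a n| + |hT| := abs_sub _ _
      _ ≤ K * B ^ n + |hT| := by linarith [hγ n]
    have hB0 : (0 : ℝ) < B := by linarith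
    have hBn1 : (1 : ℝ) ≤ B ^ n := one_le_pow₀ (by linarith)
    have hid2 : M * r ^ n * 2 ^ (n + 1) = (K + |hT| + 1) * B ^ n := by
      rw [hM, hr, div_pow, pow_succ]
      field_simp
    rw [hid2]
    have h2 : |hT| ≤ |hT| * B ^ n := by
      nlinarith [abs_nonneg hT]
    nlinarith
  -- geometric sum bound
  have hgeos : ∀ m : ℕ, (∑ j ∈ Finset.range m, r ^ j) ≤ 10.2 := by
    intro m
    have h := geom_sum_mul r m
    have hrm : (0 : ℝ) ≤ r ^ m := le_of_lt (pow_pos hr0 m)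
    have h1r : (0 : ℝ) < 1 - r := by linarith
    have h2 : (∑ j ∈ Finset.range m, r ^ j) * (1 - r) ≤ 10.2 * (1 - r) := by nlinarith
    exact le_of_mul_le_mul_right h2 h1r
  have htel : ∀ N m : ℕ, |e N - e (N + m)| ≤ ∑ j ∈ Finset.range m, M * r ^ (N + j) := by
    intro N m
    induction m with
    | zero => simp
    | succ m ih =>
      have h1 : |e N - e (N + (m + 1))| ≤ |e N - e (N + m)| + |e (N + m) - e (N + m + 1)| := by
        have := abs_sub_le (e N) (e (N + m)) (e (N + m + 1))
        exact this
      have h2 : |e (N + m) - e (N + m + 1)| ≤ M * r ^ (N + m) := by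
        rw [abs_sub_comm]
        exact hstep (N + m)
      rw [Finset.sum_range_succ]
      linarith
  have hsum : ∀ N m : ℕ, (∑ j ∈ Finset.range m, M * r ^ (N + j)) ≤ M * r ^ N * 10.2 := by
    intro N m
    have he1 : (∑ j ∈ Finset.range m, M * r ^ (N + j))
        = M * r ^ N * ∑ j ∈ Finset.range m, r ^ j := by
      rw [Finset.mul_sum]
      apply Finset.sum_congr rfl
      intro j _
      rw [pow_add]
      ring
    rw [he1]
    have h1 := hgeos m
    have h2 : (0 : ℝ) ≤ M * r ^ N := le_of_lt (mul_pos hM0 (pow_pos hr0 N))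
    nlinarith
  -- e tends to zero
  have h2pow : ∀ n : ℕ, (0 : ℝ) < 2 ^ n := fun n => by positivity
  have hbne : ∀ n : ℕ, ((2 : ℝ) ^ (n + 1) - 1) ≠ 0 := by
    intro n
    have h1 : (2 : ℝ) ^ (n + 1) = 2 * 2 ^ n := by rw [pow_succ]; ring
    have := h2pow n
    have h2 : (1 : ℝ) ≤ 2 ^ n := one_le_pow₀ (by norm_num)
    rw [h1]
    nlinarith
  have heq2 : ∀ n : ℕ, e n = (a n / ((2 : ℝ) ^ (n + 1) - 1) - hT)
      * (((2 : ℝ) ^ (n + 1) - 1) / 2 ^ n) := by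
    intro n
    rw [he, hd]
    simp only
    field_simp [hbne n]
  have hlim2 : Tendsto (fun n : ℕ => ((2 : ℝ) ^ (n + 1) - 1) / 2 ^ n) atTop (nhds 2) := by
    have hfun : ∀ n : ℕ, ((2 : ℝ) ^ (n + 1) - 1) / 2 ^ n = 2 - (1 / 2) ^ n := by
      intro n
      have := h2pow n
      rw [pow_succ, div_pow]
      field_simp
      ring
    have h0 : Tendsto (fun n : ℕ => (2 : ℝ) - (1 / 2) ^ n) atTop (nhds (2 - 0)) :=
      tendsto_const_nhds.sub
        (tendsto_pow_atTop_nhds_zero_of_lt_one (by norm_num) (by norm_num))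
    rw [sub_zero] at h0
    exact Tendsto.congr (fun n => (hfun n).symm) h0
  have hlime : Tendsto e atTop (nhds 0) := by
    have h1 : Tendsto (fun n : ℕ => a n / ((2 : ℝ) ^ (n + 1) - 1) - hT) atTop (nhds 0) := by
      have := hlim.sub_const hT
      rw [sub_self] at this
      exact this
    have h2 := h1.mul hlim2
    rw [zero_mul] at h2
    exact Tendsto.congr (fun n => (heq2 n).symm) h2
  -- bound on e
  have hEbound : ∀ N : ℕ, |e N| ≤ M * r ^ N * 10.2 := by
    intro N
    have htend : Tendsto (fun m : ℕ => M * r ^ N * 10.2 + |e (N + m)|) atTop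
        (nhds (M * r ^ N * 10.2 + 0)) := by
      apply Tendsto.add tendsto_const_nhds
      have h1 : Tendsto (fun m : ℕ => e (m + N)) atTop (nhds 0) :=
        hlime.comp (tendsto_add_atTop_nat N)
      have h2 : Tendsto (fun m : ℕ => e (N + m)) atTop (nhds 0) :=
        Tendsto.congr (fun m => by rw [Nat.add_comm]) h1
      simpa using h2.abs
    have hineq : ∀ m : ℕ, |e N| ≤ M * r ^ N * 10.2 + |e (N + m)| := by
      intro m
      have h1 := htel N m
      have h2 := hsum N m
      have h3 : |e N| ≤ |e N - e (N + m)| + |e (N + m)| := by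
        calc |e N| = |(e N - e (N + m)) + e (N + m)| := by ring_nf
        _ ≤ |e N - e (N + m)| + |e (N + m)| := abs_add_le _ _
      linarith
    have := ge_of_tendsto' htend hineq
    linarith [this]
  -- conclude
  refine ⟨M * 10.2 + 1, by nlinarith, ?_⟩
  intro n
  have hrB : r ^ n * 2 ^ n = B ^ n := by
    rw [hr, div_pow]
    field_simp
  have h1 : |d n| = |e n| * 2 ^ n := by
    rw [he]
    simp only
    rw [abs_div, abs_of_pos (h2pow n)]
    field_simp
  have hB0 : (0 : ℝ) < B := by linarith
  calc |a n - ((2 : ℝ) ^ (n + 1) - 1) * hT| = |d n| := rfl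
  _ = |e n| * 2 ^ n := h1
  _ ≤ (M * r ^ n * 10.2) * 2 ^ n := by
      apply mul_le_mul_of_nonneg_right (hEbound n) (le_of_lt (h2pow n))
  _ = (M * 10.2) * (r ^ n * 2 ^ n) := by ring
  _ = (M * 10.2) * B ^ n := by rw [hrB]
  _ ≤ (M * 10.2 + 1) * B ^ n := by
      have := pow_pos hB0 n
      nlinarith

end SEP

/-- Theorem 4.1(4): the deviation of `log|P(Δ_n, X_Ω^p × X)|` from `|Δ_n|` times the
tree entropy `h^T` is `O(B^n)`, where `B = 1/|x0|` and `x0` is the root of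
`x³ − 2x² − x + 1` of smallest absolute value. -/
theorem surfaceEntropy_treeAxialProd_mulSubshift_subshift
    {A : Type*} [Fintype A] [TopologicalSpace A] [DiscreteTopology A]
    (p : ℕ) (hp : 2 ≤ p)
    (Ω X : Set (ℕ → A)) (hΩ : IsSubshift Ω) (hX : IsSubshift X)
    (x0 : ℝ)
    (hroot : x0 ^ 3 - 2 * x0 ^ 2 - x0 + 1 = 0)
    (hmin : ∀ y : ℝ, y ^ 3 - 2 * y ^ 2 - y + 1 = 0 → |x0| ≤ |y|)
    (hT : ℝ)
    (hhT : Tendsto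
      (fun n : ℕ =>
        Real.log (pattCount (treeBall2 n) (treeAxialMulSub2 p Ω X)) /
          ((2 : ℝ) ^ (n + 1) - 1))
      atTop (nhds hT)) :
    ∃ C : ℝ, 0 < C ∧ ∀ n : ℕ,
      |Real.log (pattCount (treeBall2 n) (treeAxialMulSub2 p Ω X)) -
          ((2 : ℝ) ^ (n + 1) - 1) * hT| ≤ C * (1 / |x0|) ^ n := by
  classical
  obtain ⟨hx1, hx2⟩ := SEP.x0_bounds hroot hmin
  have hx0 : (0 : ℝ) < x0 := by norm_num at hx1 ⊢; linarith
  have habs : |x0| = x0 := abs_of_pos hx0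
  by_cases hYne : (treeAxialSub2 Ω X).Nonempty
  · have hΩshift : ∀ x ∈ Ω, (fun n => x (n + 1)) ∈ Ω := hΩ.2.2
    have hB1 : (1.8018 : ℝ) ≤ 1 / x0 := by
      rw [le_div_iff₀ hx0]
      nlinarith
    have hB2 : (1 : ℝ) / x0 ≤ 1.8022 := by
      rw [div_le_iff₀ hx0]
      nlinarith
    have hK : (0 : ℝ) ≤ 1610 * Real.log (Fintype.card A) + 1 := by
      obtain ⟨y₀, hy₀⟩ := id hYne
      haveI : Nonempty A := ⟨y₀ []⟩
      have hA : 1 ≤ Fintype.card A := Fintype.card_pos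
      have := Real.log_nonneg (show (1 : ℝ) ≤ Fintype.card A by exact_mod_cast hA)
      linarith
    obtain ⟨C, hC, hbound⟩ := SEP.telescope hB1 hB2 hK
      (fun n => SEP.gamma_bound p hp Ω X hΩshift hYne hx1 hx2 n) hhT
    exact ⟨C, hC, fun n => by simpa [habs] using hbound n⟩
  · -- the degenerate case: the system is empty
    have hZ : treeAxialMulSub2 p Ω X = ∅ := by
      rw [Set.eq_empty_iff_forall_notMem]
      intro x hx
      apply hYne
      have hval : SEP.validR p (([] : SEP.V), 1) := by
        refine ⟨Or.inl rfl, le_rfl, ?_, Or.inr rfl⟩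
        intro h
        have := Nat.le_of_dvd one_pos h
        omega
      exact ⟨fun β => x (SEP.iota p [] 1 β),
        (SEP.mem_Z_iff p hp hΩ.2.2 x).1 hx [] 1 hval⟩
    have ha : ∀ n : ℕ, pattCount (treeBall2 n) (treeAxialMulSub2 p Ω X) = 0 := by
      intro n
      rw [pattCount, hZ, Set.image_empty]
      simp
    have hT0 : hT = 0 := by
      have h0 : Tendsto
          (fun n : ℕ => Real.log (pattCount (treeBall2 n) (treeAxialMulSub2 p Ω X)) /
            ((2 : ℝ) ^ (n + 1) - 1)) atTop (nhds 0) := by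
        have he : (fun n : ℕ => Real.log (pattCount (treeBall2 n) (treeAxialMulSub2 p Ω X)) /
            ((2 : ℝ) ^ (n + 1) - 1)) = fun _ => (0 : ℝ) := by
          funext n
          rw [ha n]
          simp
        rw [he]
        exact tendsto_const_nhds
      exact tendsto_nhds_unique hhT h0
    refine ⟨1, one_pos, fun n => ?_⟩
    rw [ha n, hT0, habs]
    norm_num
    positivity
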